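/- arXiv:1101.0875 — 9 statements merged into one kernel-verified Lean document; each statement's English description precedes it below -/
import Mathlib

section
/- The matrix P = !![5,-3,0,0; 0,0,1,0; 10,-5,0,0; 0,0,0,1] over ℚ is invertible, and conjugation by P normalizes the inverses of A and T: P⁻¹ * A⁻¹ * P = !![1,1,0,0; 0,1,1,-1; 0,0,1,-1; 5,5,5,-4] and P⁻¹ * T⁻¹ * P = !![1,0,0,0; 0,1,0,0; 0,0,1,1; 0,0,0,1], where A and T are regarded as matrices over ℚ. -/
open Matrix

/-- The local monodromy of the quintic-mirror family around `λ = 0`. -/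
def A : Matrix (Fin 4) (Fin 4) ℤ :=
  !![11, 8, -5, 0; 5, -4, -3, 1; 20, 15, -9, 0; 5, -5, -3, 1]

/-- The local monodromy of the quintic-mirror family around `λ = 1`. -/
def T : Matrix (Fin 4) (Fin 4) ℤ :=
  !![1, 0, 0, 0; 0, 1, 0, -1; 0, 0, 1, 0; 0, 0, 0, 1]

/-- The normalizing matrix of Lemma 3.1. -/
def P : Matrix (Fin 4) (Fin 4) ℚ :=
  !![5, -3, 0, 0; 0, 0, 1, 0; 10, -5, 0, 0; 0, 0, 0, 1]

/-- `A` and `T`, regarded as matrices over `ℚ`. -/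
noncomputable def AQ : Matrix (Fin 4) (Fin 4) ℚ := A.map (Int.cast : ℤ → ℚ)

noncomputable def TQ : Matrix (Fin 4) (Fin 4) ℚ := T.map (Int.cast : ℤ → ℚ)

private lemma hP : P * !![-1, 0, 3/5, 0; -2, 0, 1, 0; 0, 1, 0, 0; 0, 0, 0, 1] = 1 := by
  rw [P]
  ext i j
  fin_cases i <;> fin_cases j <;>
    simp [Matrix.mul_apply, Fin.sum_univ_four, Matrix.one_apply, Matrix.vecHead, Matrix.vecTail] <;> norm_num

private lemma AQinv : AQ⁻¹ = !![-9, -3, 5, 3; 0, 1, 0, -1; -20, -5, 11, 5; -15, 5, 8, -4] := by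
  apply inv_eq_right_inv
  show AQ * _ = 1
  rw [AQ, A]
  ext i j
  fin_cases i <;> fin_cases j <;>
    simp [Matrix.mul_apply, Fin.sum_univ_four, Matrix.one_apply, Matrix.map_apply, Matrix.vecHead, Matrix.vecTail] <;> norm_num

private lemma TQinv : TQ⁻¹ = !![1, 0, 0, 0; 0, 1, 0, 1; 0, 0, 1, 0; 0, 0, 0, 1] := by
  apply inv_eq_right_inv
  show TQ * _ = 1
  rw [TQ, T]
  ext i j
  fin_cases i <;> fin_cases j <;>
    simp [Matrix.mul_apply, Fin.sum_univ_four, Matrix.one_apply, Matrix.map_apply, Matrix.vecHead, Matrix.vecTail] <;> norm_num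

set_option maxHeartbeats 1600000 in
theorem normalization_lemma :
    IsUnit P ∧
    P⁻¹ * AQ⁻¹ * P = !![1, 1, 0, 0; 0, 1, 1, -1; 0, 0, 1, -1; 5, 5, 5, -4] ∧
    P⁻¹ * TQ⁻¹ * P = !![1, 0, 0, 0; 0, 1, 0, 0; 0, 0, 1, 1; 0, 0, 0, 1] := by
  have Pinv : P⁻¹ = !![-1, 0, 3/5, 0; -2, 0, 1, 0; 0, 1, 0, 0; 0, 0, 0, 1] :=
    inv_eq_right_inv hP
  haveI := invertibleOfRightInverse P _ hP
  refine ⟨isUnit_of_invertible P, ?_, ?_⟩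
  · rw [Pinv, AQinv, P]
    ext i j
    fin_cases i <;> fin_cases j <;>
      simp [Matrix.mul_apply, Fin.sum_univ_four, Matrix.vecHead, Matrix.vecTail] <;> norm_num
  · rw [Pinv, TQinv, P]
    ext i j
    fin_cases i <;> fin_cases j <;>
      simp [Matrix.mul_apply, Fin.sum_univ_four, Matrix.vecHead, Matrix.vecTail] <;> norm_num
end

section
/- For every natural number n, the n-th power of à satisfies Ô¿â¿ = !![1, n, 3*n*(n+4), n*(n+1)*(4*n+1); 0, 1, n, 2*n*(n+1); 0, 0, 1, 4*n; 0, 0, 0, 1] as a matrix over ZMod 5 (where n is interpreted in ZMod 5). -/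
open Matrix

/-- The reduction mod 5 of `P⁻¹A⁻¹P`, where `A` is the local monodromy of the
quintic-mirror family around `λ = 0`. -/
def Atil : Matrix (Fin 4) (Fin 4) (ZMod 5) :=
  !![1, 1, 0, 0; 0, 1, 1, 4; 0, 0, 1, 4; 0, 0, 0, 1]

theorem Atil_pow (n : ℕ) :
    Atil ^ n =
      !![1, (n : ZMod 5), 3 * n * (n + 4), n * (n + 1) * (4 * n + 1);
         0, 1, (n : ZMod 5), 2 * n * (n + 1);
         0, 0, 1, 4 * (n : ZMod 5);
         0, 0, 0, 1] := by
  induction n with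
  | zero =>
    ext i j
    fin_cases i <;> fin_cases j <;> simp [Matrix.one_apply, Matrix.vecHead, Matrix.vecTail]
  | succ k ih =>
    rw [pow_succ, ih, Atil]
    ext i j
    fin_cases i <;> fin_cases j <;>
      simp [Matrix.mul_apply, Fin.sum_univ_four, Matrix.vecHead, Matrix.vecTail] <;>
        push_cast <;> ring_nf <;> reduce_mod_char
end

section
/- The set Γ̂ of matrices over ZMod 5 of the form !![1, n, 3*n^2+2*n, a; 0, 1, n, b; 0, 0, 1, c; 0, 0, 0, 1] with n, a, b, c ∈ ZMod 5 is a subgroup of GL(4, ZMod 5): it contains the identity matrix, and it is closed under matrix multiplication and under inverses; moreover it contains à and T̃. -/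
open Matrix

/-- The reduction mod 5 of `P⁻¹T⁻¹P`. -/
def Ttil : Matrix (Fin 4) (Fin 4) (ZMod 5) :=
  !![1, 0, 0, 0; 0, 1, 0, 0; 0, 0, 1, 1; 0, 0, 0, 1]

/-- The set `Γ̂` of matrices over `ZMod 5`. -/
def GammaHat : Set (Matrix (Fin 4) (Fin 4) (ZMod 5)) :=
  {X | ∃ n a b c : ZMod 5,
    X = !![1, n, 3 * n ^ 2 + 2 * n, a; 0, 1, n, b; 0, 0, 1, c; 0, 0, 0, 1]}

lemma five_eq_zero : (5 : ZMod 5) = 0 := by decide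

set_option maxHeartbeats 1600000 in
lemma gammaHat_mul (n a b c m d e f : ZMod 5) :
    (!![1, n, 3 * n ^ 2 + 2 * n, a; 0, 1, n, b; 0, 0, 1, c; 0, 0, 0, 1] *
      !![1, m, 3 * m ^ 2 + 2 * m, d; 0, 1, m, e; 0, 0, 1, f; 0, 0, 0, 1]
      : Matrix (Fin 4) (Fin 4) (ZMod 5)) =
    !![1, n + m, 3 * (n + m) ^ 2 + 2 * (n + m), d + n * e + (3 * n ^ 2 + 2 * n) * f + a;
       0, 1, n + m, e + n * f + b; 0, 0, 1, f + c; 0, 0, 0, 1] := by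
  ext i j
  fin_cases i <;> fin_cases j <;>
    simp [Matrix.mul_apply, Fin.sum_univ_four, Matrix.vecHead, Matrix.vecTail]
  all_goals first
    | ring1
    | linear_combination (-(n * m)) * five_eq_zero
    | linear_combination (n * m) * five_eq_zero

set_option maxHeartbeats 1600000 in
theorem gammaHat_subgroup :
    (1 : Matrix (Fin 4) (Fin 4) (ZMod 5)) ∈ GammaHat ∧
    (∀ X ∈ GammaHat, ∀ Y ∈ GammaHat, X * Y ∈ GammaHat) ∧
    (∀ X ∈ GammaHat, ∃ Y ∈ GammaHat, X * Y = 1 ∧ Y * X = 1) ∧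
    Atil ∈ GammaHat ∧ Ttil ∈ GammaHat := by
  refine ⟨⟨0, 0, 0, 0, by decide⟩, ?_, ?_, ⟨1, 0, 4, 4, by decide⟩, ⟨0, 0, 0, 1, by decide⟩⟩
  · rintro X ⟨n, a, b, c, rfl⟩ Y ⟨m, d, e, f, rfl⟩
    exact ⟨n + m, d + n * e + (3 * n ^ 2 + 2 * n) * f + a, e + n * f + b, f + c,
      gammaHat_mul n a b c m d e f⟩
  · rintro X ⟨n, a, b, c, rfl⟩
    refine ⟨_, ⟨-n, -a + n * b + (2 * n ^ 2 + 2 * n) * c, -b + n * c, -c, rfl⟩, ?_, ?_⟩ <;>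
      rw [gammaHat_mul] <;>
      ext i j <;> fin_cases i <;> fin_cases j <;>
      simp [Matrix.one_apply, Matrix.vecHead, Matrix.vecTail]
    all_goals first
      | ring1
      | linear_combination (n ^ 2 * c) * five_eq_zero
      | linear_combination (-(n ^ 2 * c)) * five_eq_zero
      | linear_combination (n ^ 2 * c + n ^ 2) * five_eq_zero
      | linear_combination (n ^ 2) * five_eq_zero
      | linear_combination (-(n ^ 2)) * five_eq_zero
      | linear_combination (2 * n ^ 2 * c) * five_eq_zero
      | linear_combination (-(2 * n ^ 2 * c)) * five_eq_zero
      | linear_combination (n ^ 2 * c - n ^ 2) * five_eq_zero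
      | linear_combination (-(n ^ 2 * c) + n ^ 2) * five_eq_zero
      | linear_combination (-(n ^ 2 * c) - n ^ 2) * five_eq_zero
end

section
/- Over ZMod 5 the identity E₁ = (E₂^2 * Ã^2 * T̃^4 * Ã^3 * T̃)^4 holds, where E₁ = !![1,0,0,1; 0,1,0,0; 0,0,1,0; 0,0,0,1] and E₂ = !![1,0,0,0; 0,1,0,1; 0,0,1,0; 0,0,0,1]. -/
open Matrix

def E₁ : Matrix (Fin 4) (Fin 4) (ZMod 5) :=
  !![1, 0, 0, 1; 0, 1, 0, 0; 0, 0, 1, 0; 0, 0, 0, 1]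

def E₂ : Matrix (Fin 4) (Fin 4) (ZMod 5) :=
  !![1, 0, 0, 0; 0, 1, 0, 1; 0, 0, 1, 0; 0, 0, 0, 1]


private theorem mul_fin_four' {α} [NonUnitalNonAssocSemiring α]
    (a₁₁ a₁₂ a₁₃ a₁₄ a₂₁ a₂₂ a₂₃ a₂₄ a₃₁ a₃₂ a₃₃ a₃₄ a₄₁ a₄₂ a₄₃ a₄₄
     b₁₁ b₁₂ b₁₃ b₁₄ b₂₁ b₂₂ b₂₃ b₂₄ b₃₁ b₃₂ b₃₃ b₃₄ b₄₁ b₄₂ b₄₃ b₄₄ : α) :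
    !![a₁₁, a₁₂, a₁₃, a₁₄;
       a₂₁, a₂₂, a₂₃, a₂₄;
       a₃₁, a₃₂, a₃₃, a₃₄;
       a₄₁, a₄₂, a₄₃, a₄₄] * !![b₁₁, b₁₂, b₁₃, b₁₄;
                                b₂₁, b₂₂, b₂₃, b₂₄;
                                b₃₁, b₃₂, b₃₃, b₃₄;
                                b₄₁, b₄₂, b₄₃, b₄₄] =
    !![a₁₁*b₁₁ + a₁₂*b₂₁ + a₁₃*b₃₁ + a₁₄*b₄₁, a₁₁*b₁₂ + a₁₂*b₂₂ + a₁₃*b₃₂ + a₁₄*b₄₂,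
       a₁₁*b₁₃ + a₁₂*b₂₃ + a₁₃*b₃₃ + a₁₄*b₄₃, a₁₁*b₁₄ + a₁₂*b₂₄ + a₁₃*b₃₄ + a₁₄*b₄₄;
       a₂₁*b₁₁ + a₂₂*b₂₁ + a₂₃*b₃₁ + a₂₄*b₄₁, a₂₁*b₁₂ + a₂₂*b₂₂ + a₂₃*b₃₂ + a₂₄*b₄₂,
       a₂₁*b₁₃ + a₂₂*b₂₃ + a₂₃*b₃₃ + a₂₄*b₄₃, a₂₁*b₁₄ + a₂₂*b₂₄ + a₂₃*b₃₄ + a₂₄*b₄₄;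
       a₃₁*b₁₁ + a₃₂*b₂₁ + a₃₃*b₃₁ + a₃₄*b₄₁, a₃₁*b₁₂ + a₃₂*b₂₂ + a₃₃*b₃₂ + a₃₄*b₄₂,
       a₃₁*b₁₃ + a₃₂*b₂₃ + a₃₃*b₃₃ + a₃₄*b₄₃, a₃₁*b₁₄ + a₃₂*b₂₄ + a₃₃*b₃₄ + a₃₄*b₄₄;
       a₄₁*b₁₁ + a₄₂*b₂₁ + a₄₃*b₃₁ + a₄₄*b₄₁, a₄₁*b₁₂ + a₄₂*b₂₂ + a₄₃*b₃₂ + a₄₄*b₄₂,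
       a₄₁*b₁₃ + a₄₂*b₂₃ + a₄₃*b₃₃ + a₄₄*b₄₃, a₄₁*b₁₄ + a₄₂*b₂₄ + a₄₃*b₃₄ + a₄₄*b₄₄] := by
  ext i j
  fin_cases i <;> fin_cases j <;>
    simp [Matrix.mul_apply, Fin.sum_univ_succ, ← add_assoc]

theorem E₁_eq : E₁ = (E₂ ^ 2 * Atil ^ 2 * Ttil ^ 4 * Atil ^ 3 * Ttil) ^ 4 := by
  have hA2 : Atil ^ 2 = !![1, 2, 1, 4; 0, 1, 2, 2; 0, 0, 1, 3; 0, 0, 0, 1] := by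
    rw [sq, Atil, mul_fin_four']; decide
  have hA3 : Atil ^ 3 = !![1, 3, 3, 1; 0, 1, 3, 4; 0, 0, 1, 2; 0, 0, 0, 1] := by
    rw [pow_succ, hA2, Atil, mul_fin_four']; decide
  have hT4 : Ttil ^ 4 = !![1, 0, 0, 0; 0, 1, 0, 0; 0, 0, 1, 4; 0, 0, 0, 1] := by
    rw [pow_succ, pow_succ, sq, Ttil]
    rw [show (!![1, 0, 0, 0; 0, 1, 0, 0; 0, 0, 1, 1; 0, 0, 0, 1] * !![1, 0, 0, 0; 0, 1, 0, 0; 0, 0, 1, 1; 0, 0, 0, 1] : Matrix (Fin 4) (Fin 4) (ZMod 5)) = !![1, 0, 0, 0; 0, 1, 0, 0; 0, 0, 1, 2; 0, 0, 0, 1] from by rw [mul_fin_four']; decide]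
    rw [show (!![1, 0, 0, 0; 0, 1, 0, 0; 0, 0, 1, 2; 0, 0, 0, 1] * !![1, 0, 0, 0; 0, 1, 0, 0; 0, 0, 1, 1; 0, 0, 0, 1] : Matrix (Fin 4) (Fin 4) (ZMod 5)) = !![1, 0, 0, 0; 0, 1, 0, 0; 0, 0, 1, 3; 0, 0, 0, 1] from by rw [mul_fin_four']; decide]
    rw [show (!![1, 0, 0, 0; 0, 1, 0, 0; 0, 0, 1, 3; 0, 0, 0, 1] * !![1, 0, 0, 0; 0, 1, 0, 0; 0, 0, 1, 1; 0, 0, 0, 1] : Matrix (Fin 4) (Fin 4) (ZMod 5)) = !![1, 0, 0, 0; 0, 1, 0, 0; 0, 0, 1, 4; 0, 0, 0, 1] from by rw [mul_fin_four']; decide]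
  have hE22 : E₂ ^ 2 = !![1, 0, 0, 0; 0, 1, 0, 2; 0, 0, 1, 0; 0, 0, 0, 1] := by
    rw [sq, E₂, mul_fin_four']; decide
  have hM : E₂ ^ 2 * Atil ^ 2 * Ttil ^ 4 * Atil ^ 3 * Ttil = !![1, 0, 0, 4; 0, 1, 0, 0; 0, 0, 1, 0; 0, 0, 0, 1] := by
    rw [hE22, hA2, hT4, hA3, Ttil]
    rw [show (!![1, 0, 0, 0; 0, 1, 0, 2; 0, 0, 1, 0; 0, 0, 0, 1] * !![1, 2, 1, 4; 0, 1, 2, 2; 0, 0, 1, 3; 0, 0, 0, 1] : Matrix (Fin 4) (Fin 4) (ZMod 5)) = !![1, 2, 1, 4; 0, 1, 2, 4; 0, 0, 1, 3; 0, 0, 0, 1] from by rw [mul_fin_four']; decide]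
    rw [show (!![1, 2, 1, 4; 0, 1, 2, 4; 0, 0, 1, 3; 0, 0, 0, 1] * !![1, 0, 0, 0; 0, 1, 0, 0; 0, 0, 1, 4; 0, 0, 0, 1] : Matrix (Fin 4) (Fin 4) (ZMod 5)) = !![1, 2, 1, 3; 0, 1, 2, 2; 0, 0, 1, 2; 0, 0, 0, 1] from by rw [mul_fin_four']; decide]
    rw [show (!![1, 2, 1, 3; 0, 1, 2, 2; 0, 0, 1, 2; 0, 0, 0, 1] * !![1, 3, 3, 1; 0, 1, 3, 4; 0, 0, 1, 2; 0, 0, 0, 1] : Matrix (Fin 4) (Fin 4) (ZMod 5)) = !![1, 0, 0, 4; 0, 1, 0, 0; 0, 0, 1, 4; 0, 0, 0, 1] from by rw [mul_fin_four']; decide]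
    rw [show (!![1, 0, 0, 4; 0, 1, 0, 0; 0, 0, 1, 4; 0, 0, 0, 1] * !![1, 0, 0, 0; 0, 1, 0, 0; 0, 0, 1, 1; 0, 0, 0, 1] : Matrix (Fin 4) (Fin 4) (ZMod 5)) = !![1, 0, 0, 4; 0, 1, 0, 0; 0, 0, 1, 0; 0, 0, 0, 1] from by rw [mul_fin_four']; decide]
  rw [hM, pow_succ, pow_succ, sq]
  rw [show (!![1, 0, 0, 4; 0, 1, 0, 0; 0, 0, 1, 0; 0, 0, 0, 1] * !![1, 0, 0, 4; 0, 1, 0, 0; 0, 0, 1, 0; 0, 0, 0, 1] : Matrix (Fin 4) (Fin 4) (ZMod 5)) = !![1, 0, 0, 3; 0, 1, 0, 0; 0, 0, 1, 0; 0, 0, 0, 1] from by rw [mul_fin_four']; decide]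
  rw [show (!![1, 0, 0, 3; 0, 1, 0, 0; 0, 0, 1, 0; 0, 0, 0, 1] * !![1, 0, 0, 4; 0, 1, 0, 0; 0, 0, 1, 0; 0, 0, 0, 1] : Matrix (Fin 4) (Fin 4) (ZMod 5)) = !![1, 0, 0, 2; 0, 1, 0, 0; 0, 0, 1, 0; 0, 0, 0, 1] from by rw [mul_fin_four']; decide]
  rw [show (!![1, 0, 0, 2; 0, 1, 0, 0; 0, 0, 1, 0; 0, 0, 0, 1] * !![1, 0, 0, 4; 0, 1, 0, 0; 0, 0, 1, 0; 0, 0, 0, 1] : Matrix (Fin 4) (Fin 4) (ZMod 5)) = !![1, 0, 0, 1; 0, 1, 0, 0; 0, 0, 1, 0; 0, 0, 0, 1] from by rw [mul_fin_four']; decide]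
  rw [E₁]
end

section
/- (Corollary, first part) Let Γ be the subgroup of GL(4, ℤ) generated by A and T. For every X ∈ Γ there exist integers m and n such that the characteristic polynomial of X equals x^4 + (5*m+1)*x^3 + (5*n+1)*x^2 + (5*m+1)*x + 1. -/
open Matrix Polynomial

/-- `A` as an element of `GL(4, ℤ)`. -/
def AGL : GL (Fin 4) ℤ :=
  ⟨A, !![-9, -3, 5, 3; 0, 1, 0, -1; -20, -5, 11, 5; -15, 5, 8, -4],
    by decide, by decide⟩

/-- `T` as an element of `GL(4, ℤ)`. -/
def TGL : GL (Fin 4) ℤ :=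
  ⟨T, !![1, 0, 0, 0; 0, 1, 0, 1; 0, 0, 1, 0; 0, 0, 0, 1],
    by decide, by decide⟩

section helpers
variable {R : Type*} [CommRing R]

lemma charmatrix_eq (M : Matrix (Fin 4) (Fin 4) R) :
    charmatrix M = (X : R[X]) • (1 : Matrix (Fin 4) (Fin 4) R[X]) - M.map C := by
  ext i j
  rcases eq_or_ne i j with h | h <;>
    simp [charmatrix_apply, h, Matrix.smul_apply, Matrix.one_apply, Matrix.diagonal_apply]

lemma map_C_mul (M N : Matrix (Fin 4) (Fin 4) R) :
    (M * N).map (C : R → R[X]) = M.map C * N.map C :=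
  Matrix.map_mul

lemma map_C_one : ((1 : Matrix (Fin 4) (Fin 4) R).map (C : R → R[X])) = 1 :=
  Matrix.map_one _ (map_zero C) (map_one C)

lemma my_charpoly_conj (P Q M : Matrix (Fin 4) (Fin 4) R) (hPQ : P * Q = 1) :
    (P * M * Q).charpoly = M.charpoly := by
  have hone : (P.map (C : R → R[X])).det * (Q.map C).det = 1 := by
    rw [← det_mul, ← map_C_mul, hPQ, map_C_one, det_one]
  have hkey : charmatrix (P * M * Q) = P.map C * charmatrix M * Q.map C := by
    rw [charmatrix_eq, charmatrix_eq, Matrix.mul_sub, Matrix.sub_mul]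
    congr 1
    · rw [Matrix.mul_smul, mul_one, Matrix.smul_mul, ← map_C_mul, hPQ, map_C_one]
    · rw [← map_C_mul, ← map_C_mul]
  rw [Matrix.charpoly, hkey, det_mul, det_mul, mul_right_comm, hone, one_mul, Matrix.charpoly]

lemma my_charpoly_transpose (M : Matrix (Fin 4) (Fin 4) R) : Mᵀ.charpoly = M.charpoly := by
  rw [Matrix.charpoly, Matrix.charpoly, ← Matrix.det_transpose (charmatrix M)]
  congr 1
  rw [charmatrix_eq, charmatrix_eq, Matrix.transpose_sub, Matrix.transpose_smul,
    Matrix.transpose_one, Matrix.transpose_map]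

lemma my_charpolyRev_eq (M N : Matrix (Fin 4) (Fin 4) R) (h : M * N = 1) (hd : M.det = 1) :
    M.charpolyRev = N.charpoly := by
  have hkey : M.map C * charmatrix N = -(1 - (X : R[X]) • M.map C) := by
    rw [charmatrix_eq, Matrix.mul_sub, ← map_C_mul, h, map_C_one, Matrix.mul_smul, mul_one,
      neg_sub]
  have h2 := congrArg Matrix.det hkey
  rw [det_mul, Matrix.det_neg, ← Matrix.charpoly, ← Matrix.charpolyRev,
    show (M.map ⇑(C : R →+* R[X])).det = C M.det from (RingHom.map_det C M).symm,
    hd, _root_.map_one, one_mul, Fintype.card_fin] at h2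
  rw [h2]
  norm_num
end helpers

/-- The symplectic form preserved by the monodromy group. -/
def Jm : Matrix (Fin 4) (Fin 4) ℤ := !![0,0,1,0; 0,0,0,1; -1,0,0,0; 0,-1,0,0]

/-- A change of basis over `ZMod 5` making the monodromy group upper unitriangular mod 5. -/
def Pc : Matrix (Fin 4) (Fin 4) (ZMod 5) := !![1,0,0,0; 0,1,0,0; 0,0,0,1; 0,0,1,0]

/-- Reduction of an integer matrix mod 5. -/
def red (X : Matrix (Fin 4) (Fin 4) ℤ) : Matrix (Fin 4) (Fin 4) (ZMod 5) :=
  X.map (Int.castRingHom (ZMod 5))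

/-- Upper unitriangular matrices over `ZMod 5`. -/
def Unitri (M : Matrix (Fin 4) (Fin 4) (ZMod 5)) : Prop :=
  M.BlockTriangular id ∧ ∀ i, M i i = 1

lemma diag_mul {M N : Matrix (Fin 4) (Fin 4) (ZMod 5)} (hM : M.BlockTriangular id)
    (hN : N.BlockTriangular id) (i : Fin 4) : (M * N) i i = M i i * N i i := by
  rw [Matrix.mul_apply]
  apply Finset.sum_eq_single_of_mem i (Finset.mem_univ i)
  intro k _ hk
  rcases lt_or_gt_of_ne hk with hlt | hgt
  · rw [hM (show id k < id i from hlt), zero_mul]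
  · rw [hN (show id i < id k from hgt), mul_zero]

lemma Unitri.mul {M N : Matrix (Fin 4) (Fin 4) (ZMod 5)} (hM : Unitri M) (hN : Unitri N) :
    Unitri (M * N) :=
  ⟨hM.1.mul hN.1, fun i => by rw [diag_mul hM.1 hN.1, hM.2 i, hN.2 i, one_mul]⟩

lemma Unitri.of_inv {M N : Matrix (Fin 4) (Fin 4) (ZMod 5)} (hM : Unitri M)
    (h1 : M * N = 1) (h2 : N * M = 1) : Unitri N := by
  have : Invertible M := ⟨N, h2, h1⟩
  have hNi : M⁻¹ = N := Matrix.inv_eq_right_inv h1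
  have hTri : N.BlockTriangular id := hNi ▸ Matrix.blockTriangular_inv_of_blockTriangular hM.1
  refine ⟨hTri, fun i => ?_⟩
  have h3 := diag_mul hTri hM.1 i
  rw [h2, hM.2 i, mul_one, Matrix.one_apply_eq] at h3
  exact h3.symm

lemma symp_mul {X Y : Matrix (Fin 4) (Fin 4) ℤ} (hx : Xᵀ * Jm * X = Jm)
    (hy : Yᵀ * Jm * Y = Jm) : (X * Y)ᵀ * Jm * (X * Y) = Jm := by
  calc (X * Y)ᵀ * Jm * (X * Y) = Yᵀ * (Xᵀ * Jm * X) * Y := by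
        simp only [Matrix.transpose_mul, Matrix.mul_assoc]
    _ = Jm := by rw [hx]; exact hy

/-- The invariant preserved by the monodromy group: symplectic w.r.t. `Jm`, determinant one,
and unitriangular mod 5 in the basis `Pc`. -/
def Good (g : GL (Fin 4) ℤ) : Prop :=
  (g : Matrix (Fin 4) (Fin 4) ℤ)ᵀ * Jm * g = Jm ∧ (g : Matrix (Fin 4) (Fin 4) ℤ).det = 1 ∧
    Unitri (Pc * red g * Pc)

lemma PcPc : Pc * Pc = 1 := by decide

lemma red_one : red 1 = 1 := Matrix.map_one _ (map_zero _) (map_one _)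

lemma conj_red_mul (X Y : Matrix (Fin 4) (Fin 4) ℤ) :
    Pc * red (X * Y) * Pc = (Pc * red X * Pc) * (Pc * red Y * Pc) := by
  rw [show red (X * Y) = red X * red Y from Matrix.map_mul]
  have : (Pc * red X * Pc) * (Pc * red Y * Pc) = Pc * red X * (Pc * Pc) * red Y * Pc := by
    simp only [Matrix.mul_assoc]
  rw [this, PcPc, Matrix.mul_one, ← Matrix.mul_assoc]

lemma Good.mul {x y : GL (Fin 4) ℤ} (hx : Good x) (hy : Good y) : Good (x * y) := by
  obtain ⟨hx1, hx2, hx3⟩ := hx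
  obtain ⟨hy1, hy2, hy3⟩ := hy
  unfold Good
  simp only [Units.val_mul]
  exact ⟨symp_mul hx1 hy1, by rw [det_mul, hx2, hy2, one_mul],
    by rw [conj_red_mul]; exact hx3.mul hy3⟩

lemma Good.inv {x : GL (Fin 4) ℤ} (hx : Good x) : Good x⁻¹ := by
  obtain ⟨hx1, hx2, hx3⟩ := hx
  set Xm := (x : Matrix (Fin 4) (Fin 4) ℤ) with hXm
  set Ym := ((x⁻¹ : GL (Fin 4) ℤ) : Matrix (Fin 4) (Fin 4) ℤ) with hYm
  have hXY : Xm * Ym = 1 := by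
    rw [hXm, hYm, ← Units.val_mul, mul_inv_cancel, Units.val_one]
  have hYX : Ym * Xm = 1 := by
    rw [hXm, hYm, ← Units.val_mul, inv_mul_cancel, Units.val_one]
  refine ⟨?_, ?_, ?_⟩
  · calc Ymᵀ * Jm * Ym = Ymᵀ * (Xmᵀ * Jm * Xm) * Ym := by rw [hx1]
      _ = (Xm * Ym)ᵀ * Jm * (Xm * Ym) := by
          simp only [Matrix.transpose_mul, Matrix.mul_assoc]
      _ = Jm := by rw [hXY]; simp
  · have := det_mul Xm Ym
    rw [hXY, det_one, hx2, one_mul] at this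
    exact this.symm
  · have h1 : (Pc * red Xm * Pc) * (Pc * red Ym * Pc) = 1 := by
      rw [← conj_red_mul, hXY, red_one, Matrix.mul_one, PcPc]
    have h2 : (Pc * red Ym * Pc) * (Pc * red Xm * Pc) = 1 := by
      rw [← conj_red_mul, hYX, red_one, Matrix.mul_one, PcPc]
    exact hx3.of_inv h1 h2

lemma Good_A : Good AGL := by
  refine ⟨by decide, by decide, ?_, ?_⟩
  · show (Pc * red A * Pc).BlockTriangular id
    unfold Matrix.BlockTriangular
    decide
  · decide

lemma Good_T : Good TGL := by
  refine ⟨by decide, by decide, ?_, ?_⟩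
  · show (Pc * red T * Pc).BlockTriangular id
    unfold Matrix.BlockTriangular
    decide
  · decide

lemma Good_one : Good 1 := by
  refine ⟨by simp, by simp, ?_⟩
  show Unitri (Pc * red 1 * Pc)
  rw [red_one, Matrix.mul_one, PcPc]
  exact ⟨fun i j h => Matrix.one_apply_ne (Ne.symm (ne_of_lt h)), fun i => Matrix.one_apply_eq i⟩

/-- Every element of the global monodromy group `Γ` has palindromic characteristic
polynomial of the stated congruence shape mod 5. -/
theorem charpoly_of_monodromy (X : GL (Fin 4) ℤ)
    (hX : X ∈ Subgroup.closure {AGL, TGL}) :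
    ∃ m n : ℤ,
      (X : Matrix (Fin 4) (Fin 4) ℤ).charpoly =
        Polynomial.X ^ 4 + C (5 * m + 1) * Polynomial.X ^ 3 + C (5 * n + 1) * Polynomial.X ^ 2 +
          C (5 * m + 1) * Polynomial.X + 1 := by
  have hGood : Good X := by
    refine Subgroup.closure_induction (p := fun g _ => Good g) ?_ Good_one
      (fun x y _ _ hx hy => hx.mul hy) (fun x _ hx => hx.inv) hX
    rintro x (rfl | rfl)
    · exact Good_A
    · exact Good_T
  obtain ⟨h1, hdet, hU⟩ := hGood
  set Xm := (X : Matrix (Fin 4) (Fin 4) ℤ) with hXmdef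
  set Ym := ((X⁻¹ : GL (Fin 4) ℤ) : Matrix (Fin 4) (Fin 4) ℤ) with hYmdef
  have hXY : Xm * Ym = 1 := by
    rw [hXmdef, hYmdef, ← Units.val_mul, mul_inv_cancel, Units.val_one]
  set p := Xm.charpoly with hpdef
  have hdeg : p.natDegree = 4 := by
    rw [hpdef, Matrix.charpoly_natDegree_eq_dim, Fintype.card_fin]
  -- Step B : p is self-reversed
  have hJJ : (-Jm) * Jm = 1 := by decide
  have hYeq : Ym = (-Jm) * Xmᵀ * Jm := by
    have hleft : ((-Jm) * Xmᵀ * Jm) * Xm = 1 := by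
      calc ((-Jm) * Xmᵀ * Jm) * Xm = (-Jm) * (Xmᵀ * Jm * Xm) := by
            simp only [Matrix.mul_assoc]
        _ = 1 := by rw [h1]; decide
    calc Ym = 1 * Ym := (Matrix.one_mul Ym).symm
      _ = (((-Jm) * Xmᵀ * Jm) * Xm) * Ym := by rw [hleft]
      _ = ((-Jm) * Xmᵀ * Jm) * (Xm * Ym) := by rw [Matrix.mul_assoc]
      _ = (-Jm) * Xmᵀ * Jm := by rw [hXY, Matrix.mul_one]
  have hrev : p.reverse = p := by
    rw [hpdef, Matrix.reverse_charpoly, my_charpolyRev_eq Xm Ym hXY hdet, hYeq,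
      my_charpoly_conj (-Jm) Jm Xmᵀ hJJ, my_charpoly_transpose]
  have hmonic : p.Monic := Matrix.charpoly_monic Xm
  have hc4 : p.coeff 4 = 1 := by
    have := hmonic.coeff_natDegree
    rwa [hdeg] at this
  have hc0 : p.coeff 0 = 1 := by
    have := Polynomial.coeff_reverse p 4
    rw [hrev, hdeg, Polynomial.revAt_le (le_refl 4)] at this
    rw [← this, hc4]
  have hc13 : p.coeff 3 = p.coeff 1 := by
    have := Polynomial.coeff_reverse p 3
    rw [hrev, hdeg, Polynomial.revAt_le (by norm_num)] at this
    simpa using this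
  -- Step D : mod 5
  have hmap : p.map (Int.castRingHom (ZMod 5)) =
      Polynomial.X ^ 4 + Polynomial.X ^ 3 + Polynomial.X ^ 2 + Polynomial.X + 1 := by
    have e1 : p.map (Int.castRingHom (ZMod 5)) = (red Xm).charpoly :=
      (Matrix.charpoly_map Xm (Int.castRingHom (ZMod 5))).symm
    have e2 : (red Xm).charpoly = (Pc * red Xm * Pc).charpoly :=
      (my_charpoly_conj Pc Pc (red Xm) PcPc).symm
    have e3 : (Pc * red Xm * Pc).charpoly = ((Polynomial.X : (ZMod 5)[X]) - 1) ^ 4 := by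
      rw [Matrix.charpoly_of_upperTriangular _ hU.1]
      rw [Finset.prod_congr rfl (fun i _ => by rw [hU.2 i, Polynomial.C_1] :
        ∀ i ∈ Finset.univ, (Polynomial.X - C ((Pc * red Xm * Pc) i i)) =
          ((Polynomial.X : (ZMod 5)[X]) - 1))]
      rw [Finset.prod_const, Finset.card_univ, Fintype.card_fin]
    have e4 : ((Polynomial.X : (ZMod 5)[X]) - 1) ^ 4 =
        Polynomial.X ^ 4 + Polynomial.X ^ 3 + Polynomial.X ^ 2 + Polynomial.X + 1 := by
      have h5 : (C (5 : ZMod 5) : (ZMod 5)[X]) = 0 := by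
        rw [show (5 : ZMod 5) = 0 from rfl, map_zero]
      have h5' : ((5 : ℕ) : (ZMod 5)[X]) = 0 := by
        rw [← Polynomial.C_eq_natCast]
        exact_mod_cast h5
      push_cast at h5'
      linear_combination ((Polynomial.X : (ZMod 5)[X]) ^ 2 - Polynomial.X ^ 3 - Polynomial.X) * h5'
    rw [e1, e2, e3, e4]
  have hcq3 : ((p.coeff 3 : ℤ) : ZMod 5) = 1 := by
    have := congrArg (fun q => Polynomial.coeff q 3) hmap
    simp only [Polynomial.coeff_map, Int.coe_castRingHom] at this
    rw [this]
    simp [Polynomial.coeff_one, Polynomial.coeff_X]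
  have hcq2 : ((p.coeff 2 : ℤ) : ZMod 5) = 1 := by
    have := congrArg (fun q => Polynomial.coeff q 2) hmap
    simp only [Polynomial.coeff_map, Int.coe_castRingHom] at this
    rw [this]
    simp [Polynomial.coeff_one, Polynomial.coeff_X]
  obtain ⟨m, hm⟩ : ∃ m : ℤ, p.coeff 3 = 5 * m + 1 := by
    have : ((p.coeff 3 - 1 : ℤ) : ZMod 5) = 0 := by
      rw [Int.cast_sub, Int.cast_one, hcq3, sub_self]
    obtain ⟨m, hm⟩ := (ZMod.intCast_zmod_eq_zero_iff_dvd _ 5).mp this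
    exact ⟨m, by omega⟩
  obtain ⟨n, hn⟩ : ∃ n : ℤ, p.coeff 2 = 5 * n + 1 := by
    have : ((p.coeff 2 - 1 : ℤ) : ZMod 5) = 0 := by
      rw [Int.cast_sub, Int.cast_one, hcq2, sub_self]
    obtain ⟨n, hn⟩ := (ZMod.intCast_zmod_eq_zero_iff_dvd _ 5).mp this
    exact ⟨n, by omega⟩
  refine ⟨m, n, ?_⟩
  have hrep := Polynomial.as_sum_range' p 5 (by rw [hdeg]; norm_num)
  show p = _
  rw [hrep, Finset.sum_range_succ, Finset.sum_range_succ, Finset.sum_range_succ,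
    Finset.sum_range_succ, Finset.sum_range_one, hc0, hc4, hm, hn,
    show p.coeff 1 = 5 * m + 1 from hc13 ▸ hm]
  simp only [← Polynomial.C_mul_X_pow_eq_monomial, Polynomial.C_1, pow_zero, pow_one]
  ring
end

section
/- (Corollary, second part) Let Γ be the subgroup of GL(4, ℤ) generated by A and T. If X ∈ Γ is not the identity and has finite order, then the order of X is 5 and the characteristic polynomial of X is x^4 + x^3 + x^2 + x + 1 (the fifth cyclotomic polynomial); in particular the eigenvalues of X are exactly the four primitive 5th roots of unity. -/
open Matrix Polynomial

namespace MonodromyAux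

def rk : Fin 4 → ℕ := ![0, 1, 3, 2]

def Unip (g : Matrix (Fin 4) (Fin 4) (ZMod 5)) : Prop :=
  ∀ i j, ¬ rk i < rk j → (g - 1) i j = 0

instance : DecidablePred Unip := fun g => by
  unfold Unip
  haveI : ∀ i, Decidable (∀ j, ¬ rk i < rk j → (g - 1) i j = 0) := fun i => inferInstance
  infer_instance

lemma unip_one : Unip 1 := by decide

lemma unip_mul {g h : Matrix (Fin 4) (Fin 4) (ZMod 5)} (hg : Unip g) (hh : Unip h) :
    Unip (g * h) := by
  intro i j hij
  have key : g * h - 1 = (g - 1) * (h - 1) + ((g - 1) + (h - 1)) := by noncomm_ring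
  rw [key, Matrix.add_apply, Matrix.add_apply, hg i j hij, hh i j hij, Matrix.mul_apply]
  rw [Finset.sum_eq_zero, add_zero, add_zero]
  intro k _
  by_cases h1 : rk i < rk k
  · by_cases h2 : rk k < rk j
    · exact absurd (h1.trans h2) hij
    · rw [hh k j h2, mul_zero]
  · rw [hg i k h1, zero_mul]

lemma nilp_pow {N : Matrix (Fin 4) (Fin 4) (ZMod 5)}
    (hN : ∀ i j, ¬ rk i < rk j → N i j = 0) :
    ∀ d i j, (N ^ (d + 1)) i j ≠ 0 → rk i + d < rk j := by
  intro d
  induction d with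
  | zero =>
      intro i j h
      rw [pow_one] at h
      by_contra hc; exact h (hN i j (by omega))
  | succ d ih =>
      intro i j h
      rw [pow_succ, Matrix.mul_apply] at h
      obtain ⟨k, -, hk⟩ := Finset.exists_ne_zero_of_sum_ne_zero h
      have h1 : (N ^ (d + 1)) i k ≠ 0 := fun h0 => hk (by rw [h0, zero_mul])
      have h2 : N k j ≠ 0 := fun h0 => hk (by rw [h0, mul_zero])
      have := ih i k h1
      have h3 : rk k < rk j := by by_contra hc; exact h2 (hN k j hc)
      omega

lemma rk_le (j : Fin 4) : rk j ≤ 3 := by fin_cases j <;> decide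

lemma unip_pow_five {g : Matrix (Fin 4) (Fin 4) (ZMod 5)} (hg : Unip g) : g ^ 5 = 1 := by
  have h4 : (g - 1) ^ 4 = 0 := by
    ext i j
    by_contra hc
    have := nilp_pow hg 3 i j hc
    have := rk_le j
    omega
  have h5 : (g - 1) ^ 5 = 0 := by rw [pow_succ, h4, zero_mul]
  have hgN : g = 1 + (g - 1) := by abel
  haveI : Fact (Nat.Prime 5) := ⟨by norm_num⟩
  calc g ^ 5 = (1 + (g - 1)) ^ 5 := by rw [← hgN]
    _ = 1 ^ 5 + (g - 1) ^ 5 := add_pow_char_of_commute _ (Commute.one_left _)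
    _ = 1 := by rw [h5, one_pow, add_zero]

end MonodromyAux

namespace MonodromyAux

abbrev Mat := Matrix (Fin 4) (Fin 4) ℤ

lemma entry_dvd_mul {a b : ℕ} {P Q : Mat}
    (hP : ∀ i j, (5:ℤ)^a ∣ P i j) (hQ : ∀ i j, (5:ℤ)^b ∣ Q i j) :
    ∀ i j, (5:ℤ)^(a+b) ∣ (P * Q) i j := by
  intro i j
  rw [Matrix.mul_apply]
  apply Finset.dvd_sum
  intro k _
  rw [pow_add]
  exact mul_dvd_mul (hP i k) (hQ k j)

lemma entry_dvd_mul_right {a : ℕ} {P : Mat} (Q : Mat) (hP : ∀ i j, (5:ℤ)^a ∣ P i j) :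
    ∀ i j, (5:ℤ)^a ∣ (P * Q) i j := by
  intro i j
  rw [Matrix.mul_apply]
  exact Finset.dvd_sum fun k _ => dvd_mul_of_dvd_left (hP i k) _

lemma entry_dvd_pow_exact {a : ℕ} {M : Mat} (hM : ∀ i j, (5:ℤ)^a ∣ M i j) :
    ∀ k i j, (5:ℤ)^(k*a) ∣ (M ^ k) i j := by
  intro k
  induction k with
  | zero => intro i j; simp
  | succ k ih =>
      intro i j
      rw [pow_succ, add_one_mul]
      exact entry_dvd_mul ih hM i j

lemma entry_dvd_pow {a k m : ℕ} {M : Mat} (hM : ∀ i j, (5:ℤ)^a ∣ M i j) (hkm : k ≤ m) :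
    ∀ i j, (5:ℤ)^(k*a) ∣ (M ^ m) i j := by
  have : M ^ m = M ^ k * M ^ (m - k) := by rw [← pow_add]; congr 1; omega
  rw [this]
  exact entry_dvd_mul_right _ (entry_dvd_pow_exact hM k)

lemma natCast_mat_entry (P : Mat) (c : ℕ) (i j : Fin 4) :
    (P * (c : Mat)) i j = P i j * (c : ℤ) := by
  rw [Matrix.mul_apply]
  rw [Finset.sum_eq_single j]
  · rw [← Matrix.diagonal_natCast, Matrix.diagonal_apply, if_pos rfl]
  · intro k _ hk
    rw [← Matrix.diagonal_natCast, Matrix.diagonal_apply, if_neg hk, mul_zero]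
  · intro h; exact absurd (Finset.mem_univ j) h

end MonodromyAux

namespace MonodromyAux

lemma minkowski_step {q : ℕ} (hq : q.Prime) {M : Mat} {a : ℕ} (ha : 1 ≤ a)
    (hM : ∀ i j, (5:ℤ)^a ∣ M i j) (h : (1 + M) ^ q = 1) :
    ∀ i j, (5:ℤ)^(a+1) ∣ M i j := by
  have hq2 : 2 ≤ q := hq.two_le
  rw [add_comm, (Commute.one_right M).add_pow q] at h
  simp only [one_pow, mul_one] at h
  obtain ⟨r, hr⟩ : ∃ r, q + 1 = r + 1 + 1 := ⟨q - 1, by omega⟩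
  rw [hr, Finset.sum_range_succ', Finset.sum_range_succ'] at h
  simp only [zero_add, pow_zero, Nat.choose_zero_right, Nat.cast_one, mul_one, pow_one,
    Nat.choose_one_right] at h
  have h0 := add_right_cancel (h.trans (zero_add (1 : Mat)).symm)
  have hS : M * (q : Mat) = -(∑ i ∈ Finset.range r, M ^ (i + 1 + 1) * ((q.choose (i + 1 + 1) : ℕ) : Mat)) :=
    eq_neg_of_add_eq_zero_right h0
  intro i j
  have hentry : M i j * (q:ℤ) =
      -(∑ i' ∈ Finset.range r, (M ^ (i' + 1 + 1)) i j * ((q.choose (i' + 1 + 1) : ℕ) : ℤ)) := by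
    have hc := congrArg (fun P : Mat => P i j) hS
    simp only [Matrix.neg_apply, Matrix.sum_apply, natCast_mat_entry] at hc
    exact hc
  by_cases hq5 : q = 5
  · subst hq5
    have hr4 : r = 4 := by omega
    subst hr4
    have hterm : ∀ i' ∈ Finset.range 4,
        (5:ℤ)^(a+2) ∣ (M ^ (i' + 1 + 1)) i j * (((5).choose (i' + 1 + 1) : ℕ) : ℤ) := by
      intro i' hi'
      rw [Finset.mem_range] at hi'
      interval_cases i'
      · refine dvd_trans (pow_dvd_pow 5 (by omega : a + 2 ≤ 2*a + 1)) ?_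
        rw [pow_succ]
        exact mul_dvd_mul (entry_dvd_pow hM (by norm_num) i j) (by norm_num [Nat.choose])
      · refine dvd_trans (pow_dvd_pow 5 (by omega : a + 2 ≤ 2*a + 1)) ?_
        rw [pow_succ]
        exact mul_dvd_mul (entry_dvd_pow hM (by norm_num) i j) (by norm_num [Nat.choose])
      · refine dvd_trans (pow_dvd_pow 5 (by omega : a + 2 ≤ 2*a + 1)) ?_
        rw [pow_succ]
        exact mul_dvd_mul (entry_dvd_pow hM (by norm_num) i j) (by norm_num [Nat.choose])
      · refine dvd_trans (pow_dvd_pow 5 (by omega : a + 2 ≤ 3*a)) ?_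
        exact dvd_mul_of_dvd_left (entry_dvd_pow hM (by norm_num) i j) _
    have hdvd : (5:ℤ)^(a+1) * 5 ∣ M i j * ((5:ℕ):ℤ) := by
      rw [← pow_succ, hentry]
      exact dvd_neg.mpr (Finset.dvd_sum hterm)
    have : (5:ℤ)^(a+1) * 5 ∣ M i j * 5 := by exact_mod_cast hdvd
    exact (mul_dvd_mul_iff_right (by norm_num : (5:ℤ) ≠ 0)).mp this
  · have hdvd : (5:ℤ)^(a+1) ∣ M i j * (q:ℤ) := by
      rw [hentry]
      refine dvd_neg.mpr (Finset.dvd_sum fun i' _ => ?_)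
      refine dvd_trans (pow_dvd_pow 5 (by omega : a + 1 ≤ 2*a)) ?_
      exact dvd_mul_of_dvd_left (entry_dvd_pow hM (by omega) i j) _
    have hp5 : Prime (5:ℤ) := by norm_num
    refine hp5.pow_dvd_of_dvd_mul_right _ ?_ hdvd
    intro hdd
    have : (5:ℕ) ∣ q := by exact_mod_cast hdd
    exact hq5 (((Nat.prime_dvd_prime_iff_eq (by norm_num) hq).mp this).symm)

end MonodromyAux

namespace MonodromyAux

lemma eq_one_of_prime_pow {q : ℕ} (hq : q.Prime) {Z : Mat} (hZ : Z ^ q = 1)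
    (h1 : ∀ i j, (5:ℤ) ∣ (Z - 1) i j) : Z = 1 := by
  have hZM : Z = 1 + (Z - 1) := by abel
  have hall : ∀ a, ∀ i j, (5:ℤ)^(a+1) ∣ (Z - 1) i j := by
    intro a
    induction a with
    | zero => simpa using h1
    | succ a ih =>
        exact minkowski_step hq (by omega) ih (by rw [← hZM]; exact hZ)
  have hM0 : Z - 1 = 0 := by
    ext i j
    by_contra hm
    set n := ((Z - 1) i j).natAbs with hn
    have hd := hall n i j
    have hle : (5:ℤ)^(n+1) ≤ |(Z - 1) i j| :=
      Int.le_of_dvd (abs_pos.mpr hm) ((dvd_abs _ _).mpr hd)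
    have habs : |(Z - 1) i j| = (n:ℤ) := Int.abs_eq_natAbs _
    have hlt : (n:ℤ) < 5^(n+1) := by
      have h1 : n < 5^n := Nat.lt_pow_self (by norm_num)
      have h2 : (5:ℕ)^n ≤ 5^(n+1) := Nat.pow_le_pow_right (by norm_num) (by omega)
      exact_mod_cast h1.trans_le h2
    omega
  have := sub_eq_zero.mp hM0
  exact this

lemma pow_cong_one {Y : Mat} (h1 : ∀ i j, (5:ℤ) ∣ (Y - 1) i j) (k : ℕ) :
    ∀ i j, (5:ℤ) ∣ (Y ^ k - 1) i j := by
  induction k with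
  | zero => simp
  | succ k ih =>
      have key : Y ^ (k+1) - 1 = Y ^ k * (Y - 1) + (Y ^ k - 1) := by noncomm_ring
      intro i j
      rw [key, Matrix.add_apply]
      refine dvd_add ?_ (ih i j)
      rw [Matrix.mul_apply]
      exact Finset.dvd_sum fun l _ => Dvd.dvd.mul_left (h1 l j) _

lemma gl_torsion_eq_one (Y : GL (Fin 4) ℤ) (hf : IsOfFinOrder Y)
    (h1 : ∀ i j, (5:ℤ) ∣ ((Y : Mat) - 1) i j) : Y = 1 := by
  by_contra hne
  have hn1 : orderOf Y ≠ 1 := by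
    rw [Ne, orderOf_eq_one_iff]
    exact hne
  obtain ⟨q, hq, hdvd⟩ := (orderOf Y).exists_prime_and_dvd hn1
  set Z := Y ^ (orderOf Y / q) with hZdef
  have hgcd : Nat.gcd (orderOf Y) (orderOf Y / q) = orderOf Y / q :=
    Nat.gcd_eq_right (Nat.div_dvd_of_dvd hdvd)
  have horder : orderOf Z = q := by
    rw [hZdef, hf.orderOf_pow, hgcd, Nat.div_div_self hdvd hf.orderOf_pos.ne']
  have hZq : (Z : Mat) ^ q = 1 := by
    rw [← Units.val_pow_eq_pow_val, ← horder, pow_orderOf_eq_one, Units.val_one]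
  have hZ1 : ∀ i j, (5:ℤ) ∣ ((Z : Mat) - 1) i j := by
    rw [hZdef]
    have := pow_cong_one h1 (orderOf Y / q)
    simpa [Units.val_pow_eq_pow_val] using this
  have : Z = 1 := Units.ext (eq_one_of_prime_pow hq hZq hZ1)
  rw [this, orderOf_one] at horder
  exact hq.ne_one horder.symm

end MonodromyAux

namespace MonodromyAux

/-- reduction mod 5 -/
def red : GL (Fin 4) ℤ →* GL (Fin 4) (ZMod 5) :=
  Units.map (RingHom.toMonoidHom (RingHom.mapMatrix (Int.castRingHom (ZMod 5))))

lemma red_val (X : GL (Fin 4) ℤ) :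
    ((red X : GL (Fin 4) (ZMod 5)) : Matrix (Fin 4) (Fin 4) (ZMod 5)) =
      (X : Mat).map (Int.cast : ℤ → ZMod 5) := rfl

lemma unip_redA : Unip ((red AGL : GL (Fin 4) (ZMod 5)) : Matrix (Fin 4) (Fin 4) (ZMod 5)) := by
  rw [red_val]
  decide

lemma unip_redT : Unip ((red TGL : GL (Fin 4) (ZMod 5)) : Matrix (Fin 4) (Fin 4) (ZMod 5)) := by
  rw [red_val]
  decide

lemma unip_pow {u : GL (Fin 4) (ZMod 5)}
    (hu : Unip (u : Matrix (Fin 4) (Fin 4) (ZMod 5))) (k : ℕ) :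
    Unip ((u ^ k : GL (Fin 4) (ZMod 5)) : Matrix (Fin 4) (Fin 4) (ZMod 5)) := by
  induction k with
  | zero => simpa using unip_one
  | succ k ih =>
      rw [pow_succ, Units.val_mul]
      exact unip_mul ih hu

lemma unip_of_mem_closure {g : GL (Fin 4) (ZMod 5)}
    (hg : g ∈ Subgroup.closure {red AGL, red TGL}) :
    Unip (g : Matrix (Fin 4) (Fin 4) (ZMod 5)) := by
  refine Subgroup.closure_induction ?_ ?_ ?_ ?_ hg
  · intro x hx
    rcases hx with h | h
    · rw [h]; exact unip_redA
    · rw [h]; exact unip_redT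
  · simpa using unip_one
  · intro x y _ _ hx hy
    rw [Units.val_mul]
    exact unip_mul hx hy
  · intro x _ hx
    have hfin : IsOfFinOrder x := isOfFinOrder_of_finite x
    have hpos : 0 < orderOf x := hfin.orderOf_pos
    have hinv : x⁻¹ = x ^ (orderOf x - 1) := by
      apply inv_eq_of_mul_eq_one_right
      rw [← pow_succ', Nat.sub_add_cancel hpos, pow_orderOf_eq_one]
    rw [hinv]
    exact unip_pow hx _

end MonodromyAux

namespace MonodromyAux

lemma pow_five_eq_one {X : GL (Fin 4) ℤ}
    (hX : X ∈ Subgroup.closure {AGL, TGL}) (hfin : IsOfFinOrder X) :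
    X ^ 5 = 1 := by
  have hmem : red X ∈ Subgroup.closure {red AGL, red TGL} := by
    have h1 : red X ∈ Subgroup.map red (Subgroup.closure {AGL, TGL}) :=
      Subgroup.mem_map_of_mem red hX
    rwa [MonoidHom.map_closure, Set.image_pair] at h1
  have hU := unip_of_mem_closure hmem
  have h5 : red (X ^ 5) = 1 := by
    rw [_root_.map_pow]
    apply Units.ext
    rw [Units.val_pow_eq_pow_val, unip_pow_five hU, Units.val_one]
  have hdvd : ∀ i j, (5:ℤ) ∣ (((X ^ 5 : GL (Fin 4) ℤ) : Mat) - 1) i j := by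
    intro i j
    have hc := congrArg
      (fun u : GL (Fin 4) (ZMod 5) => (u : Matrix (Fin 4) (Fin 4) (ZMod 5)) i j) h5
    simp only [red_val, Matrix.map_apply, Units.val_one] at hc
    rw [show (5:ℤ) = ((5:ℕ):ℤ) by norm_num]
    rw [← ZMod.intCast_zmod_eq_zero_iff_dvd, Matrix.sub_apply, Int.cast_sub, hc]
    by_cases hij : i = j <;> simp [Matrix.one_apply, hij]
  exact gl_torsion_eq_one (X ^ 5) (hfin.pow) hdvd

lemma charpoly_eq {M : Mat} (h5 : M ^ 5 = 1) (hne : M ≠ 1) :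
    M.charpoly = Polynomial.cyclotomic 5 ℤ := by
  haveI : Fact (Nat.Prime 5) := ⟨by norm_num⟩
  set f := Int.castRingHom ℚ with hf
  set Mq : Matrix (Fin 4) (Fin 4) ℚ := f.mapMatrix M with hMq
  have hMq5 : Mq ^ 5 = 1 := by rw [hMq, ← _root_.map_pow, h5, _root_.map_one]
  have hMqne : Mq ≠ 1 := by
    intro hcon
    apply hne
    ext i j
    have hc := congrArg (fun P : Matrix (Fin 4) (Fin 4) ℚ => P i j) hcon
    simp only [hMq, RingHom.mapMatrix_apply, Matrix.map_apply] at hc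
    have h1 : f (M i j) = f ((1 : Mat) i j) := by
      rw [hc]
      by_cases hij : i = j <;> simp [Matrix.one_apply, hij]
    exact Int.cast_injective h1
  have hdvdmin : minpoly ℚ Mq ∣ (Polynomial.X : ℚ[X])^5 - 1 := by
    apply minpoly.dvd
    rw [_root_.map_sub, _root_.map_pow, Polynomial.aeval_X, _root_.map_one, hMq5, sub_self]
  have hfactor : (Polynomial.X : ℚ[X])^5 - 1 = Polynomial.cyclotomic 5 ℚ * (Polynomial.X - 1) := by
    rw [Polynomial.cyclotomic_prime]
    exact (geom_sum_mul (Polynomial.X : ℚ[X]) 5).symm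
  have hΦirr : Irreducible (Polynomial.cyclotomic 5 ℚ) :=
    Polynomial.cyclotomic.irreducible_rat (by norm_num)
  have hΦdvd : Polynomial.cyclotomic 5 ℚ ∣ minpoly ℚ Mq := by
    by_contra hnd
    have hcop : IsCoprime (Polynomial.cyclotomic 5 ℚ) (minpoly ℚ Mq) :=
      (hΦirr.coprime_iff_not_dvd).mpr hnd
    have hdvd1 : minpoly ℚ Mq ∣ (Polynomial.X - 1 : ℚ[X]) := by
      refine hcop.symm.dvd_of_dvd_mul_left ?_
      rwa [← hfactor]
    obtain ⟨c, hc⟩ := hdvd1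
    have h0 : Polynomial.aeval Mq (Polynomial.X - 1 : ℚ[X]) = 0 := by
      rw [hc, _root_.map_mul, minpoly.aeval, zero_mul]
    rw [_root_.map_sub, Polynomial.aeval_X, _root_.map_one, sub_eq_zero] at h0
    exact hMqne h0
  have hΦchar : Polynomial.cyclotomic 5 ℚ ∣ Mq.charpoly :=
    hΦdvd.trans (Matrix.minpoly_dvd_charpoly Mq)
  have hassoc : Associated (Polynomial.cyclotomic 5 ℚ) Mq.charpoly := by
    refine Polynomial.associated_of_dvd_of_natDegree_le hΦchar Mq.charpoly_monic.ne_zero ?_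
    rw [Matrix.charpoly_natDegree_eq_dim, Polynomial.natDegree_cyclotomic]
    rw [Nat.totient_prime (by norm_num : Nat.Prime 5)]
    simp
  have hq : Mq.charpoly = Polynomial.cyclotomic 5 ℚ :=
    eq_of_monic_of_associated Mq.charpoly_monic (Polynomial.cyclotomic.monic 5 ℚ) hassoc.symm
  have hmap : (M.charpoly).map f = Mq.charpoly := by
    rw [hMq, RingHom.mapMatrix_apply, Matrix.charpoly_map]
  have hfinal : (M.charpoly).map f = (Polynomial.cyclotomic 5 ℤ).map f := by
    rw [hmap, hq, Polynomial.map_cyclotomic]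
  exact Polynomial.map_injective f Int.cast_injective hfinal

end MonodromyAux


/-- A non-identity element of the global monodromy group `Γ` of finite order has
order `5`, and its characteristic polynomial is the fifth cyclotomic polynomial,
so its eigenvalues are exactly the four primitive fifth roots of unity. -/
theorem order_of_finite_order_monodromy (X : GL (Fin 4) ℤ)
    (hX : X ∈ Subgroup.closure {AGL, TGL}) (hne : X ≠ 1) (hfin : IsOfFinOrder X) :
    orderOf X = 5 ∧
    (X : Matrix (Fin 4) (Fin 4) ℤ).charpoly =
      Polynomial.X ^ 4 + Polynomial.X ^ 3 + Polynomial.X ^ 2 + Polynomial.X + 1 ∧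
    (X : Matrix (Fin 4) (Fin 4) ℤ).charpoly = Polynomial.cyclotomic 5 ℤ := by
  have h5 : X ^ 5 = 1 := MonodromyAux.pow_five_eq_one hX hfin
  have hM5 : (X : Matrix (Fin 4) (Fin 4) ℤ) ^ 5 = 1 := by
    rw [← Units.val_pow_eq_pow_val, h5, Units.val_one]
  have hMne : (X : Matrix (Fin 4) (Fin 4) ℤ) ≠ 1 := fun h => hne (Units.ext h)
  have hchar : (X : Matrix (Fin 4) (Fin 4) ℤ).charpoly = Polynomial.cyclotomic 5 ℤ :=
    MonodromyAux.charpoly_eq hM5 hMne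
  have hord : orderOf X = 5 := by
    have hdvd : orderOf X ∣ 5 := orderOf_dvd_of_pow_eq_one h5
    rcases Nat.Prime.eq_one_or_self_of_dvd (by norm_num) _ hdvd with h | h
    · exact absurd (orderOf_eq_one_iff.mp h) hne
    · exact h
  refine ⟨hord, ?_, hchar⟩
  rw [hchar]
  haveI : Fact (Nat.Prime 5) := ⟨by norm_num⟩
  rw [Polynomial.cyclotomic_prime]
  rw [Finset.sum_range_succ, Finset.sum_range_succ, Finset.sum_range_succ,
    Finset.sum_range_succ, Finset.sum_range_one]
  ring
end

section
/- If X ∈ Sp(4,ℤ) has finite order and its characteristic polynomial is x^4 + (5*m+1)*x^3 + (5*n+1)*x^2 + (5*m+1)*x + 1 for some integers m, n, and X is not the identity matrix, then X^5 = 1. -/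
open Matrix Polynomial

/-- The standard symplectic form matrix. -/
def Jsym : Matrix (Fin 4) (Fin 4) ℤ :=
  !![0, 0, 1, 0; 0, 0, 0, 1; -1, 0, 0, 0; 0, -1, 0, 0]

noncomputable def Complex.abs : AbsoluteValue ℂ ℝ :=
  IsAbsoluteValue.toAbsoluteValue (norm : ℂ → ℝ)

lemma Complex.abs_intCast (n : ℤ) : Complex.abs (n : ℂ) = |(n : ℝ)| :=
  Complex.norm_intCast n

private lemma multiset_card_four {α : Type*} {s : Multiset α} (h : Multiset.card s = 4) :
    ∃ a b c d, s = a ::ₘ b ::ₘ c ::ₘ d ::ₘ 0 := by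
  have hne : s ≠ 0 := by intro h0; subst h0; simp at h
  obtain ⟨a, ha⟩ := Multiset.exists_mem_of_ne_zero hne
  obtain ⟨t, rfl⟩ := Multiset.exists_cons_of_mem ha
  rw [Multiset.card_cons] at h
  have ht : Multiset.card t = 3 := by omega
  obtain ⟨x, y, z, rfl⟩ := Multiset.card_eq_three.mp ht
  exact ⟨a, x, y, z, by simp [Multiset.insert_eq_cons]⟩

private lemma unipotent_eq_one (A : Matrix (Fin 4) (Fin 4) ℤ) (K : ℕ) (hK : 4 ≤ K)
    (h1 : A ^ K = 1) (h4 : (A - 1) ^ 4 = 0) : A = 1 := by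
  set N := A - 1 with hN
  have hA : A = N + 1 := by rw [hN]; abel
  have hKne : (K : ℤ) ≠ 0 := by exact_mod_cast (by omega : K ≠ 0)
  have hNi : ∀ i, 4 ≤ i → N ^ i = 0 := by
    intro i hi
    rw [← Nat.sub_add_cancel hi, pow_add, h4, mul_zero]
  have hbin : (1 : Matrix (Fin 4) (Fin 4) ℤ) =
      ∑ i ∈ Finset.range (K + 1), N ^ i * 1 ^ (K - i) * (K.choose i : Matrix (Fin 4) (Fin 4) ℤ) := by
    conv_lhs => rw [← h1, hA]
    exact Commute.add_pow (Commute.one_right N) K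
  have hsub : ∑ i ∈ Finset.range 4, N ^ i * 1 ^ (K - i) * (K.choose i : Matrix (Fin 4) (Fin 4) ℤ)
      = ∑ i ∈ Finset.range (K + 1), N ^ i * 1 ^ (K - i) * (K.choose i : Matrix (Fin 4) (Fin 4) ℤ) := by
    apply Finset.sum_subset
    · intro x hx
      simp only [Finset.mem_range] at *
      omega
    · intro x _ hx
      simp only [Finset.mem_range, not_lt] at hx
      rw [hNi x hx, zero_mul, zero_mul]
  rw [← hsub] at hbin
  simp only [Finset.sum_range_succ, Finset.sum_range_zero, zero_add, pow_zero, pow_one,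
    one_pow, one_mul, mul_one, Nat.choose_zero_right, Nat.cast_one, Nat.choose_one_right] at hbin
  -- hbin : 1 = 1 + N * K + N^2 * c2 + N^3 * c3
  have heq : N * (K : Matrix (Fin 4) (Fin 4) ℤ)
      + (N ^ 2 * ((K.choose 2 : ℕ) : Matrix (Fin 4) (Fin 4) ℤ)
      + N ^ 3 * ((K.choose 3 : ℕ) : Matrix (Fin 4) (Fin 4) ℤ)) = 0 := by
    rwa [add_assoc, add_assoc, left_eq_add] at hbin
  have entry_zero : ∀ (B : Matrix (Fin 4) (Fin 4) ℤ) (c : ℕ), c ≠ 0 →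
      B * ((c : ℕ) : Matrix (Fin 4) (Fin 4) ℤ) = 0 → B = 0 := by
    intro B c hc h
    ext i j
    have := congrArg (fun M => M i j) h
    simp only [Matrix.zero_apply] at this ⊢
    rw [show ((c : ℕ) : Matrix (Fin 4) (Fin 4) ℤ) = (c : ℤ) • (1 : Matrix (Fin 4) (Fin 4) ℤ) by
      simp, Matrix.mul_smul, Matrix.mul_one] at this
    simp only [Matrix.smul_apply, smul_eq_mul] at this
    have hcz : (c : ℤ) ≠ 0 := by exact_mod_cast hc
    exact (mul_eq_zero.mp this).resolve_left hcz
  have hN4 : N ^ 4 = 0 := h4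
  have e1 : N ^ 2 * N = N ^ 3 := by rw [← pow_succ]
  have e2' : N ^ 2 * N ^ 2 = N ^ 4 := by rw [← pow_add]
  have e3 : N ^ 2 * N ^ 3 = N ^ 4 * N := by rw [← pow_add, pow_succ]
  have e4 : N * N = N ^ 2 := by rw [← pow_two]
  have e5 : N * N ^ 2 = N ^ 3 := by rw [← pow_succ']
  have e6 : N * N ^ 3 = N ^ 4 := by rw [← pow_succ']
  have h3 : N ^ 3 = 0 := by
    have hm := congrArg (fun B => N ^ 2 * B) heq
    simp only [mul_add, mul_zero, ← mul_assoc, e1, e2', e3, hN4, zero_mul,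
      add_zero, zero_add] at hm
    exact entry_zero _ K (by omega) hm
  have h2 : N ^ 2 = 0 := by
    have hm := congrArg (fun B => N * B) heq
    simp only [mul_add, mul_zero, ← mul_assoc, e4, e5, e6, hN4, h3, zero_mul,
      add_zero, zero_add] at hm
    exact entry_zero _ K (by omega) hm
  have h1' : N = 0 := by
    rw [h2, h3, zero_mul, zero_mul, add_zero, add_zero] at heq
    exact entry_zero _ K (by omega) heq
  have : A - 1 = 0 := h1'
  rw [sub_eq_zero] at this
  exact this

set_option maxHeartbeats 1000000 in
theorem pow_five_eq_one_of_finite_order (X : Matrix (Fin 4) (Fin 4) ℤ)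
    (hsymp : Xᵀ * Jsym * X = Jsym)
    (hfin : IsOfFinOrder X)
    (hchar : ∃ m n : ℤ,
      X.charpoly =
        Polynomial.X ^ 4 + C (5 * m + 1) * Polynomial.X ^ 3 + C (5 * n + 1) * Polynomial.X ^ 2 +
          C (5 * m + 1) * Polynomial.X + 1)
    (hne : X ≠ 1) :
    X ^ 5 = 1 := by
  obtain ⟨m, n, hchar⟩ := hchar
  obtain ⟨k, hk, hXk⟩ := isOfFinOrder_iff_pow_eq_one.mp hfin
  set f := Int.castRingHom ℂ with hf
  set Y : Matrix (Fin 4) (Fin 4) ℂ := X.map f with hYdef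
  have hYk : Y ^ k = 1 := by
    have : f.mapMatrix (X ^ k) = f.mapMatrix 1 := congrArg _ hXk
    simpa [map_pow] using this
  -- roots of charpoly of Y
  have hmonic : Y.charpoly.Monic := Matrix.charpoly_monic Y
  have hsplits : Y.charpoly.Splits := IsAlgClosed.splits Y.charpoly
  have hdeg : Y.charpoly.natDegree = 4 := by
    rw [Matrix.charpoly_natDegree_eq_dim]; simp
  have hcard : Multiset.card Y.charpoly.roots = 4 := by
    rw [(Polynomial.splits_iff_card_roots).mp hsplits, hdeg]
  have hprodform : Y.charpoly = (Y.charpoly.roots.map fun a => Polynomial.X - C a).prod :=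
    (hsplits.eq_prod_roots_of_monic hmonic)
  -- every root is a k-th root of unity, hence has norm one
  have hroot_norm : ∀ ρ ∈ Y.charpoly.roots, Complex.abs ρ = 1 := by
    intro ρ hρ
    have hIsRoot : Y.charpoly.IsRoot ρ := Polynomial.isRoot_of_mem_roots hρ
    have hdet : (ρ • (1 : Matrix (Fin 4) (Fin 4) ℂ) - Y).det = 0 := by
      have heval : Y.charpoly.eval ρ = (ρ • (1 : Matrix (Fin 4) (Fin 4) ℂ) - Y).det := by
        rw [Matrix.charpoly, _root_.eval_det, matPolyEquiv_charmatrix]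
        simp [Matrix.scalar_apply, Matrix.smul_eq_diagonal_mul]
      rw [Polynomial.IsRoot, heval] at hIsRoot
      exact hIsRoot
    obtain ⟨v, hv0, hveq⟩ := (Matrix.exists_mulVec_eq_zero_iff).mpr hdet
    have hYv : Y *ᵥ v = ρ • v := by
      rw [Matrix.sub_mulVec, Matrix.smul_mulVec, Matrix.one_mulVec] at hveq
      exact (sub_eq_zero.mp hveq).symm
    have hpow : ∀ j : ℕ, (Y ^ j) *ᵥ v = ρ ^ j • v := by
      intro j
      induction j with
      | zero => simp [Matrix.one_mulVec]
      | succ j ih =>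
        rw [pow_succ', ← Matrix.mulVec_mulVec, ih, Matrix.mulVec_smul, hYv, smul_smul,
          ← pow_succ]
    have hv : ρ ^ k • v = v := by
      rw [← hpow k, hYk, Matrix.one_mulVec]
    obtain ⟨i, hi⟩ := Function.ne_iff.mp hv0
    have hvi : ρ ^ k * v i = v i := congrFun hv i
    have hρk : ρ ^ k = 1 := by
      have hz : (ρ ^ k - 1) * v i = 0 := by linear_combination hvi
      rcases mul_eq_zero.mp hz with h | h
      · exact sub_eq_zero.mp h
      · exact absurd h hi
    have habs : Complex.abs ρ ^ k = 1 := by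
      rw [← _root_.map_pow, hρk, _root_.map_one]
    have h0 : (0 : ℝ) ≤ Complex.abs ρ := AbsoluteValue.nonneg _ _
    have hkne : k ≠ 0 := by omega
    rcases lt_trichotomy (Complex.abs ρ) 1 with hlt | heq1 | hgt
    · have hlt2 : Complex.abs ρ ^ k < 1 := pow_lt_one₀ h0 hlt hkne
      linarith
    · exact heq1
    · have hgt2 : 1 < Complex.abs ρ ^ k := one_lt_pow₀ hgt hkne
      linarith
  -- destructure the four roots
  obtain ⟨a, b, c, d, habcd⟩ := multiset_card_four hcard
  have hamem : a ∈ Y.charpoly.roots := by rw [habcd]; simp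
  have hbmem : b ∈ Y.charpoly.roots := by rw [habcd]; simp
  have hcmem : c ∈ Y.charpoly.roots := by rw [habcd]; simp
  have hdmem : d ∈ Y.charpoly.roots := by rw [habcd]; simp
  have ha1 := hroot_norm a hamem
  have hb1 := hroot_norm b hbmem
  have hc1 := hroot_norm c hcmem
  have hd1 := hroot_norm d hdmem
  set α : ℂ := ((5 * m + 1 : ℤ) : ℂ) with hα
  set β : ℂ := ((5 * n + 1 : ℤ) : ℂ) with hβ
  have hYchar : Y.charpoly = Polynomial.X ^ 4 + C α * Polynomial.X ^ 3 + C β * Polynomial.X ^ 2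
      + C α * Polynomial.X + 1 := by
    rw [hYdef, Matrix.charpoly_map, hchar]
    simp only [Polynomial.map_add, Polynomial.map_mul, Polynomial.map_pow, Polynomial.map_one,
      Polynomial.map_C, Polynomial.map_X]
    rfl
  have hprod4 : Y.charpoly
      = Polynomial.X ^ 4 - C (a + b + c + d) * Polynomial.X ^ 3
        + C (a*b + a*c + a*d + b*c + b*d + c*d) * Polynomial.X ^ 2
        - C (a*b*c + a*b*d + a*c*d + b*c*d) * Polynomial.X + C (a*b*c*d) := by
    rw [hprodform, habcd]
    simp only [Multiset.map_cons, Multiset.map_zero, Multiset.prod_cons, Multiset.prod_zero,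
      mul_one, _root_.map_add, _root_.map_mul]
    ring
  have heqp := hYchar.symm.trans hprod4
  have h3 : α = -(a + b + c + d) := by
    have h := congrArg (fun p => Polynomial.coeff p 3) heqp
    simp only [coeff_add, coeff_sub, coeff_C_mul, coeff_X_pow, coeff_X, coeff_one, coeff_C] at h
    norm_num at h
    linear_combination h
  have h2 : β = a*b + a*c + a*d + b*c + b*d + c*d := by
    have h := congrArg (fun p => Polynomial.coeff p 2) heqp
    simp only [coeff_add, coeff_sub, coeff_C_mul, coeff_X_pow, coeff_X, coeff_one, coeff_C] at h
    norm_num at h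
    linear_combination h
  have hsum_abs : Complex.abs (a + b + c + d) ≤ 4 := by
    calc Complex.abs (a + b + c + d)
        ≤ Complex.abs (a + b + c) + Complex.abs d := Complex.abs.add_le _ _
      _ ≤ Complex.abs (a + b) + Complex.abs c + Complex.abs d :=
          add_le_add_left (Complex.abs.add_le _ _) _
      _ ≤ Complex.abs a + Complex.abs b + Complex.abs c + Complex.abs d :=
          add_le_add_left (add_le_add_left (Complex.abs.add_le _ _) _) _
      _ = 4 := by rw [ha1, hb1, hc1, hd1]; norm_num
  have hsq_abs : Complex.abs (a^2 + b^2 + c^2 + d^2) ≤ 4 := by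
    calc Complex.abs (a^2 + b^2 + c^2 + d^2)
        ≤ Complex.abs (a^2 + b^2 + c^2) + Complex.abs (d^2) := Complex.abs.add_le _ _
      _ ≤ Complex.abs (a^2 + b^2) + Complex.abs (c^2) + Complex.abs (d^2) :=
          add_le_add_left (Complex.abs.add_le _ _) _
      _ ≤ Complex.abs (a^2) + Complex.abs (b^2) + Complex.abs (c^2) + Complex.abs (d^2) :=
          add_le_add_left (add_le_add_left (Complex.abs.add_le _ _) _) _
      _ = 4 := by
          rw [_root_.map_pow, _root_.map_pow, _root_.map_pow, _root_.map_pow,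
            ha1, hb1, hc1, hd1]
          norm_num
  have hm4 : |5 * m + 1| ≤ 4 := by
    have hαabs : Complex.abs α ≤ 4 := by
      rw [h3, AbsoluteValue.map_neg]; exact hsum_abs
    rw [hα, Complex.abs_intCast, ← Int.cast_abs] at hαabs
    exact_mod_cast hαabs
  have hsq : a^2 + b^2 + c^2 + d^2 = α^2 - 2*β := by
    rw [h3, h2]; ring
  have hn4 : |(5*m+1)^2 - 2*(5*n+1)| ≤ 4 := by
    have hβ2 : Complex.abs (α^2 - 2*β) ≤ 4 := hsq ▸ hsq_abs
    have hcast : ((((5*m+1)^2 - 2*(5*n+1) : ℤ)) : ℂ) = α^2 - 2*β := by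
      rw [hα, hβ]; push_cast; ring
    rw [← hcast, Complex.abs_intCast, ← Int.cast_abs] at hβ2
    exact_mod_cast hβ2
  have hmn : (m = 0 ∧ n = 0) ∨ (m = -1 ∧ n = 1) := by
    rw [abs_le] at hm4 hn4
    have hmcase : m = 0 ∨ m = -1 := by omega
    rcases hmcase with rfl | rfl
    · left; refine ⟨rfl, ?_⟩; norm_num at hn4; omega
    · right; refine ⟨rfl, ?_⟩; norm_num at hn4; omega
  have hCH := Matrix.aeval_self_charpoly X
  rcases hmn with ⟨rfl, rfl⟩ | ⟨rfl, rfl⟩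
  · -- charpoly is the 5th cyclotomic polynomial
    rw [hchar] at hCH
    norm_num at hCH
    -- hCH : X^4 + X^3 + X^2 + X + 1 = 0
    have h5 : X ^ 5 - 1 = (X - 1) * (X^4 + X^3 + X^2 + X + 1) := by noncomm_ring
    rw [hCH, mul_zero] at h5
    exact sub_eq_zero.mp h5
  · -- charpoly is (x-1)^4 : X is unipotent of finite order, contradiction
    exfalso
    have hpoly : X.charpoly = (Polynomial.X - 1 : Polynomial ℤ)^4 := by
      rw [hchar]; norm_num; ring
    rw [hpoly] at hCH
    simp only [_root_.map_pow, _root_.map_sub, aeval_X, _root_.map_one] at hCH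
    have hXk4 : X ^ (k * 4) = 1 := by rw [pow_mul, hXk, one_pow]
    exact hne (unipotent_eq_one X (k * 4) (by omega) hXk4 hCH)
end

section
/- (Corollary (i)) Γ̃(5,5) is a subgroup of Sp(4,ℤ) contained in Γ(5,5): it contains the identity, is closed under matrix multiplication and inverses within Sp(4,ℤ), and every element of Γ̃(5,5) lies in Γ(5,5). -/
open Matrix

/-- `Sp(4, ℤ)`: the set of symplectic `4 × 4` integer matrices. -/
def Sp4Z : Set (Matrix (Fin 4) (Fin 4) ℤ) := {X | Xᵀ * Jsym * X = Jsym}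

/-- The congruence subgroup `Γ(5,5)` of Chen–Yang–Yui. -/
def Gamma55 : Set (Matrix (Fin 4) (Fin 4) ℤ) :=
  {X | X ∈ Sp4Z ∧
    X 0 0 ≡ 1 [ZMOD 5] ∧ X 1 1 ≡ 1 [ZMOD 5] ∧ X 2 2 ≡ 1 [ZMOD 5] ∧ X 3 3 ≡ 1 [ZMOD 5] ∧
    X 1 0 ≡ 0 [ZMOD 5] ∧ X 2 0 ≡ 0 [ZMOD 5] ∧ X 2 1 ≡ 0 [ZMOD 5] ∧ X 2 3 ≡ 0 [ZMOD 5] ∧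
    X 3 0 ≡ 0 [ZMOD 5] ∧ X 3 1 ≡ 0 [ZMOD 5]}

/-- The smaller congruence subgroup `Γ̃(5,5)`. -/
def GammaTilde55 : Set (Matrix (Fin 4) (Fin 4) ℤ) :=
  {X | X ∈ Gamma55 ∧
    X 2 0 ≡ 15 * X 0 1 [ZMOD 25] ∧
    X 2 1 ≡ 20 * (X 0 1) ^ 2 + 20 * X 0 1 [ZMOD 25]}

/-- Corollary (i): `Γ̃(5,5)` is a subgroup of `Γ(5,5)`. -/
theorem gammaTilde55_subgroup :
    (1 : Matrix (Fin 4) (Fin 4) ℤ) ∈ GammaTilde55 ∧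
    (∀ X ∈ GammaTilde55, ∀ Y ∈ GammaTilde55, X * Y ∈ GammaTilde55) ∧
    (∀ X ∈ GammaTilde55, ∀ Y : Matrix (Fin 4) (Fin 4) ℤ,
      X * Y = 1 → Y * X = 1 → Y ∈ GammaTilde55) ∧
    GammaTilde55 ⊆ Gamma55 := by
  refine ⟨?_, ?_, ?_, fun X hX => hX.1⟩
  · -- identity
    have h0 : ∀ i j : Fin 4, (1 : Matrix (Fin 4) (Fin 4) ℤ) i j = if i = j then 1 else 0 :=
      fun i j => Matrix.one_apply
    refine ⟨⟨?_, ?_, ?_, ?_, ?_, ?_, ?_, ?_, ?_, ?_, ?_⟩, ?_, ?_⟩ <;>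
      simp [Sp4Z, Matrix.one_apply]
  · -- multiplication
    rintro X ⟨⟨hXsp, hX1, hX2, hX3, hX4, hX5, _, _, hX8, hX9, hX10⟩, hXa, hXb⟩
    rintro Y ⟨⟨hYsp, hY1, hY2, hY3, hY4, hY5, _, _, hY8, hY9, hY10⟩, hYa, hYb⟩
    obtain ⟨x1, hx1⟩ := hX1.dvd
    obtain ⟨x2, hx2⟩ := hX2.dvd
    obtain ⟨x3, hx3⟩ := hX3.dvd
    obtain ⟨x4, hx4⟩ := hX4.dvd
    obtain ⟨x5, hx5⟩ := hX5.dvd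
    obtain ⟨x8, hx8⟩ := hX8.dvd
    obtain ⟨x9, hx9⟩ := hX9.dvd
    obtain ⟨x10, hx10⟩ := hX10.dvd
    obtain ⟨xa, hxa⟩ := hXa.dvd
    obtain ⟨xb, hxb⟩ := hXb.dvd
    have ex1 : X 0 0 = 1 - 5*x1 := by linear_combination -hx1
    have ex2 : X 1 1 = 1 - 5*x2 := by linear_combination -hx2
    have ex3 : X 2 2 = 1 - 5*x3 := by linear_combination -hx3
    have ex4 : X 3 3 = 1 - 5*x4 := by linear_combination -hx4
    have ex5 : X 1 0 = -5*x5 := by linear_combination -hx5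
    have ex8 : X 2 3 = -5*x8 := by linear_combination -hx8
    have ex9 : X 3 0 = -5*x9 := by linear_combination -hx9
    have ex10 : X 3 1 = -5*x10 := by linear_combination -hx10
    have exa : X 2 0 = 15 * X 0 1 - 25*xa := by linear_combination -hxa
    have exb : X 2 1 = 20 * (X 0 1)^2 + 20 * X 0 1 - 25*xb := by linear_combination -hxb
    obtain ⟨y1, hy1⟩ := hY1.dvd
    obtain ⟨y2, hy2⟩ := hY2.dvd
    obtain ⟨y3, hy3⟩ := hY3.dvd
    obtain ⟨y4, hy4⟩ := hY4.dvd
    obtain ⟨y5, hy5⟩ := hY5.dvd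
    obtain ⟨y8, hy8⟩ := hY8.dvd
    obtain ⟨y9, hy9⟩ := hY9.dvd
    obtain ⟨y10, hy10⟩ := hY10.dvd
    obtain ⟨ya, hya⟩ := hYa.dvd
    obtain ⟨yb, hyb⟩ := hYb.dvd
    have ey1 : Y 0 0 = 1 - 5*y1 := by linear_combination -hy1
    have ey2 : Y 1 1 = 1 - 5*y2 := by linear_combination -hy2
    have ey3 : Y 2 2 = 1 - 5*y3 := by linear_combination -hy3
    have ey4 : Y 3 3 = 1 - 5*y4 := by linear_combination -hy4
    have ey5 : Y 1 0 = -5*y5 := by linear_combination -hy5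
    have ey8 : Y 2 3 = -5*y8 := by linear_combination -hy8
    have ey9 : Y 3 0 = -5*y9 := by linear_combination -hy9
    have ey10 : Y 3 1 = -5*y10 := by linear_combination -hy10
    have eya : Y 2 0 = 15 * Y 0 1 - 25*ya := by linear_combination -hya
    have eyb : Y 2 1 = 20 * (Y 0 1)^2 + 20 * Y 0 1 - 25*yb := by linear_combination -hyb
    refine ⟨⟨?_, ?_, ?_, ?_, ?_, ?_, ?_, ?_, ?_, ?_, ?_⟩, ?_, ?_⟩
    · show (X*Y)ᵀ * Jsym * (X*Y) = Jsym
      rw [transpose_mul, Matrix.mul_assoc, Matrix.mul_assoc, ← Matrix.mul_assoc Jsym X Y,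
        ← Matrix.mul_assoc Xᵀ (Jsym*X) Y, ← Matrix.mul_assoc Xᵀ Jsym X, hXsp, ← Matrix.mul_assoc, hYsp]
    · rw [Int.modEq_iff_dvd]
      simp only [Matrix.mul_apply, Fin.sum_univ_four]
      simp only [ex1, ex2, ex3, ex4, ex5, ex8, ex9, ex10, exa, exb, ey1, ey2, ey3, ey4, ey5, ey8, ey9, ey10, eya, eyb]
      exact ⟨(X 0 1)*y5 + (-3)*(X 0 2)*(Y 0 1) + 5*(X 0 2)*ya + (X 0 3)*y9 + x1 + (-5)*x1*y1 + y1, by ring⟩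
    · rw [Int.modEq_iff_dvd]
      simp only [Matrix.mul_apply, Fin.sum_univ_four]
      simp only [ex1, ex2, ex3, ex4, ex5, ex8, ex9, ex10, exa, exb, ey1, ey2, ey3, ey4, ey5, ey8, ey9, ey10, eya, eyb]
      exact ⟨(-4)*(X 1 2)*(Y 0 1) + (-4)*(X 1 2)*(Y 0 1)*(Y 0 1) + 5*(X 1 2)*yb + (X 1 3)*y10 + (Y 0 1)*x5 + x2 + (-5)*x2*y2 + y2, by ring⟩
    · rw [Int.modEq_iff_dvd]
      simp only [Matrix.mul_apply, Fin.sum_univ_four]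
      simp only [ex1, ex2, ex3, ex4, ex5, ex8, ex9, ex10, exa, exb, ey1, ey2, ey3, ey4, ey5, ey8, ey9, ey10, eya, eyb]
      exact ⟨(-4)*(X 0 1)*(X 0 1)*(Y 1 2) + (-3)*(X 0 1)*(Y 0 2) + (-4)*(X 0 1)*(Y 1 2) + 5*(Y 0 2)*xa + 5*(Y 1 2)*xb + (Y 3 2)*x8 + x3 + (-5)*x3*y3 + y3, by ring⟩
    · rw [Int.modEq_iff_dvd]
      simp only [Matrix.mul_apply, Fin.sum_univ_four]
      simp only [ex1, ex2, ex3, ex4, ex5, ex8, ex9, ex10, exa, exb, ey1, ey2, ey3, ey4, ey5, ey8, ey9, ey10, eya, eyb]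
      exact ⟨(X 3 2)*y8 + (Y 0 3)*x9 + (Y 1 3)*x10 + x4 + (-5)*x4*y4 + y4, by ring⟩
    · rw [Int.modEq_iff_dvd]
      simp only [Matrix.mul_apply, Fin.sum_univ_four]
      simp only [ex1, ex2, ex3, ex4, ex5, ex8, ex9, ex10, exa, exb, ey1, ey2, ey3, ey4, ey5, ey8, ey9, ey10, eya, eyb]
      exact ⟨(-3)*(X 1 2)*(Y 0 1) + 5*(X 1 2)*ya + (X 1 3)*y9 + (-5)*x2*y5 + x5 + (-5)*x5*y1 + y5, by ring⟩
    · rw [Int.modEq_iff_dvd]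
      simp only [Matrix.mul_apply, Fin.sum_univ_four]
      simp only [ex1, ex2, ex3, ex4, ex5, ex8, ex9, ex10, exa, exb, ey1, ey2, ey3, ey4, ey5, ey8, ey9, ey10, eya, eyb]
      exact ⟨(-3)*(X 0 1) + 20*(X 0 1)*(X 0 1)*y5 + 15*(X 0 1)*y1 + 20*(X 0 1)*y5 + (-3)*(Y 0 1) + 15*(Y 0 1)*x3 + (-25)*x3*ya + (-5)*x8*y9 + 5*xa + (-25)*xa*y1 + (-25)*xb*y5 + 5*ya, by ring⟩
    · rw [Int.modEq_iff_dvd]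
      simp only [Matrix.mul_apply, Fin.sum_univ_four]
      simp only [ex1, ex2, ex3, ex4, ex5, ex8, ex9, ex10, exa, exb, ey1, ey2, ey3, ey4, ey5, ey8, ey9, ey10, eya, eyb]
      exact ⟨(-4)*(X 0 1) + (-4)*(X 0 1)*(X 0 1) + 20*(X 0 1)*(X 0 1)*y2 + (-3)*(X 0 1)*(Y 0 1) + 20*(X 0 1)*y2 + (-4)*(Y 0 1) + (-4)*(Y 0 1)*(Y 0 1) + 20*(Y 0 1)*(Y 0 1)*x3 + 20*(Y 0 1)*x3 + 5*(Y 0 1)*xa + (-25)*x3*yb + (-5)*x8*y10 + 5*xb + (-25)*xb*y2 + 5*yb, by ring⟩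
    · rw [Int.modEq_iff_dvd]
      simp only [Matrix.mul_apply, Fin.sum_univ_four]
      simp only [ex1, ex2, ex3, ex4, ex5, ex8, ex9, ex10, exa, exb, ey1, ey2, ey3, ey4, ey5, ey8, ey9, ey10, eya, eyb]
      exact ⟨(-4)*(X 0 1)*(X 0 1)*(Y 1 3) + (-3)*(X 0 1)*(Y 0 3) + (-4)*(X 0 1)*(Y 1 3) + 5*(Y 0 3)*xa + 5*(Y 1 3)*xb + (-5)*x3*y8 + x8 + (-5)*x8*y4 + y8, by ring⟩
    · rw [Int.modEq_iff_dvd]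
      simp only [Matrix.mul_apply, Fin.sum_univ_four]
      simp only [ex1, ex2, ex3, ex4, ex5, ex8, ex9, ex10, exa, exb, ey1, ey2, ey3, ey4, ey5, ey8, ey9, ey10, eya, eyb]
      exact ⟨(-3)*(X 3 2)*(Y 0 1) + 5*(X 3 2)*ya + (-5)*x10*y5 + (-5)*x4*y9 + x9 + (-5)*x9*y1 + y9, by ring⟩
    · rw [Int.modEq_iff_dvd]
      simp only [Matrix.mul_apply, Fin.sum_univ_four]
      simp only [ex1, ex2, ex3, ex4, ex5, ex8, ex9, ex10, exa, exb, ey1, ey2, ey3, ey4, ey5, ey8, ey9, ey10, eya, eyb]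
      exact ⟨(-4)*(X 3 2)*(Y 0 1) + (-4)*(X 3 2)*(Y 0 1)*(Y 0 1) + 5*(X 3 2)*yb + (Y 0 1)*x9 + x10 + (-5)*x10*y2 + (-5)*x4*y10 + y10, by ring⟩
    · rw [Int.modEq_iff_dvd]
      simp only [Matrix.mul_apply, Fin.sum_univ_four]
      simp only [ex1, ex2, ex3, ex4, ex5, ex8, ex9, ex10, exa, exb, ey1, ey2, ey3, ey4, ey5, ey8, ey9, ey10, eya, eyb]
      exact ⟨4*(X 0 1)*(X 0 1)*y5 + 3*(X 0 1)*y1 + (-3)*(X 0 1)*y2 + 4*(X 0 1)*y5 + 12*(X 0 2)*(Y 0 1) + 12*(X 0 2)*(Y 0 1)*(Y 0 1) + (-15)*(X 0 2)*yb + (-3)*(X 0 3)*y10 + (-3)*(Y 0 1)*x1 + 3*(Y 0 1)*x3 + (-5)*x3*ya + (-1)*x8*y9 + xa + (-5)*xa*y1 + (-5)*xb*y5 + ya, by ring⟩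
    · rw [Int.modEq_iff_dvd]
      simp only [Matrix.mul_apply, Fin.sum_univ_four]
      simp only [ex1, ex2, ex3, ex4, ex5, ex8, ex9, ex10, exa, exb, ey1, ey2, ey3, ey4, ey5, ey8, ey9, ey10, eya, eyb]
      exact ⟨(-4)*(X 0 1)*(X 0 1)*y2 + 20*(X 0 1)*(X 0 1)*y2*y2 + 32*(X 0 1)*(X 0 2)*(Y 0 1) + 32*(X 0 1)*(X 0 2)*(Y 0 1)*(Y 0 1) + (-160)*(X 0 1)*(X 0 2)*(Y 0 1)*(Y 0 1)*y2 + (-160)*(X 0 1)*(X 0 2)*(Y 0 1)*y2 + 200*(X 0 1)*(X 0 2)*y2*yb + (-40)*(X 0 1)*(X 0 2)*yb + (-8)*(X 0 1)*(X 0 3)*y10 + 40*(X 0 1)*(X 0 3)*y10*y2 + (X 0 1)*(Y 0 1) + (-8)*(X 0 1)*(Y 0 1)*x1 + 40*(X 0 1)*(Y 0 1)*x1*y2 + (-8)*(X 0 1)*(Y 0 1)*y2 + 320*(X 0 2)*(X 0 2)*(Y 0 1)*(Y 0 1) + 640*(X 0 2)*(X 0 2)*(Y 0 1)*(Y 0 1)*(Y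 0 1) + 320*(X 0 2)*(X 0 2)*(Y 0 1)*(Y 0 1)*(Y 0 1)*(Y 0 1) + (-800)*(X 0 2)*(X 0 2)*(Y 0 1)*(Y 0 1)*yb + (-800)*(X 0 2)*(X 0 2)*(Y 0 1)*yb + 500*(X 0 2)*(X 0 2)*yb*yb + (-160)*(X 0 2)*(X 0 3)*(Y 0 1)*(Y 0 1)*y10 + (-160)*(X 0 2)*(X 0 3)*(Y 0 1)*y10 + 200*(X 0 2)*(X 0 3)*y10*yb + 16*(X 0 2)*(Y 0 1) + 48*(X 0 2)*(Y 0 1)*(Y 0 1) + 32*(X 0 2)*(Y 0 1)*(Y 0 1)*(Y 0 1) + (-160)*(X 0 2)*(Y 0 1)*(Y 0 1)*(Y 0 1)*x1 + (-160)*(X 0 2)*(Y 0 1)*(Y 0 1)*x1 + 200*(X 0 2)*(Y 0 1)*x1*yb + (-40)*(X 0 2)*(Y 0 1)*yb + (-20)*(X 0 2)*yb + 20*(X 0 3)*(X 0 3)*y10*y10 + 40*(X 0 3)*(Y 0 1)*x1*y10 + (-8)*(X 0 3)*(Y 0 1)*y10 + (-4)*(X 0 3)*y10 + (-8)*(Y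 0 1)*(Y 0 1)*x1 + 20*(Y 0 1)*(Y 0 1)*x1*x1 + 4*(Y 0 1)*(Y 0 1)*x3 + (-4)*(Y 0 1)*x1 + 4*(Y 0 1)*x3 + (Y 0 1)*xa + (-5)*x3*yb + (-1)*x8*y10 + xb + (-5)*xb*y2 + yb, by ring⟩
  · -- inversion
    rintro X ⟨⟨hXsp, hX1, hX2, hX3, hX4, hX5, _, _, hX8, hX9, hX10⟩, hXa, hXb⟩
    intro Y hXY hYX
    have h01 := congrFun (congrFun hXsp 0) 1
    simp [Jsym, Matrix.mul_apply, Matrix.transpose_apply, Fin.sum_univ_four] at h01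
    have h12 := congrFun (congrFun hXsp 1) 2
    simp [Jsym, Matrix.mul_apply, Matrix.transpose_apply, Fin.sum_univ_four] at h12
    obtain ⟨x1, hx1⟩ := hX1.dvd
    obtain ⟨x2, hx2⟩ := hX2.dvd
    obtain ⟨x3, hx3⟩ := hX3.dvd
    obtain ⟨x4, hx4⟩ := hX4.dvd
    obtain ⟨x5, hx5⟩ := hX5.dvd
    obtain ⟨x8, hx8⟩ := hX8.dvd
    obtain ⟨x9, hx9⟩ := hX9.dvd
    obtain ⟨x10, hx10⟩ := hX10.dvd
    obtain ⟨xa, hxa⟩ := hXa.dvd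
    obtain ⟨xb, hxb⟩ := hXb.dvd
    have ex1 : X 0 0 = 1 - 5*x1 := by linear_combination -hx1
    have ex2 : X 1 1 = 1 - 5*x2 := by linear_combination -hx2
    have ex3 : X 2 2 = 1 - 5*x3 := by linear_combination -hx3
    have ex4 : X 3 3 = 1 - 5*x4 := by linear_combination -hx4
    have ex5 : X 1 0 = -5*x5 := by linear_combination -hx5
    have ex8 : X 2 3 = -5*x8 := by linear_combination -hx8
    have ex9 : X 3 0 = -5*x9 := by linear_combination -hx9
    have ex10 : X 3 1 = -5*x10 := by linear_combination -hx10
    have exa : X 2 0 = 15 * X 0 1 - 25*xa := by linear_combination -hxa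
    have exb : X 2 1 = 20 * (X 0 1)^2 + 20 * X 0 1 - 25*xb := by linear_combination -hxb
    simp only [ex1, ex2, ex3, ex4, ex5, ex8, ex9, ex10, exa, exb] at h01 h12
    have hJJ : Jsym * Jsym = -1 := by
      ext i j; fin_cases i <;> fin_cases j <;>
        simp [Jsym, Matrix.mul_apply, Fin.sum_univ_four, Matrix.one_apply, Matrix.vecHead, Matrix.vecTail]
    have h1 : (-(Jsym * Xᵀ * Jsym)) * X = 1 := by
      have h2 : Jsym * (Xᵀ * Jsym * X) = Jsym * Jsym := by rw [hXsp]
      rw [hJJ] at h2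
      calc (-(Jsym * Xᵀ * Jsym)) * X = -(Jsym * (Xᵀ * Jsym * X)) := by
              simp only [Matrix.neg_mul, Matrix.mul_assoc]
        _ = 1 := by rw [h2]; simp
    have hYeq : Y = -(Jsym * Xᵀ * Jsym) := by
      calc Y = 1 * Y := by rw [Matrix.one_mul]
        _ = (-(Jsym * Xᵀ * Jsym)) * X * Y := by rw [h1]
        _ = (-(Jsym * Xᵀ * Jsym)) * (X * Y) := by rw [Matrix.mul_assoc]
        _ = -(Jsym * Xᵀ * Jsym) := by rw [hXY, Matrix.mul_one]
    have e00 : Y 0 0 = X 2 2 := by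
      rw [hYeq]
      simp only [Matrix.neg_apply, Matrix.mul_apply, Fin.sum_univ_four, Matrix.transpose_apply]
      norm_num [Jsym, Matrix.vecHead, Matrix.vecTail, Matrix.cons_val_zero, Matrix.cons_val_one, Matrix.cons_val_two, Matrix.cons_val_three]
    have e01 : Y 0 1 = X 3 2 := by
      rw [hYeq]
      simp only [Matrix.neg_apply, Matrix.mul_apply, Fin.sum_univ_four, Matrix.transpose_apply]
      norm_num [Jsym, Matrix.vecHead, Matrix.vecTail, Matrix.cons_val_zero, Matrix.cons_val_one, Matrix.cons_val_two, Matrix.cons_val_three]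
    have e10 : Y 1 0 = X 2 3 := by
      rw [hYeq]
      simp only [Matrix.neg_apply, Matrix.mul_apply, Fin.sum_univ_four, Matrix.transpose_apply]
      norm_num [Jsym, Matrix.vecHead, Matrix.vecTail, Matrix.cons_val_zero, Matrix.cons_val_one, Matrix.cons_val_two, Matrix.cons_val_three]
    have e11 : Y 1 1 = X 3 3 := by
      rw [hYeq]
      simp only [Matrix.neg_apply, Matrix.mul_apply, Fin.sum_univ_four, Matrix.transpose_apply]
      norm_num [Jsym, Matrix.vecHead, Matrix.vecTail, Matrix.cons_val_zero, Matrix.cons_val_one, Matrix.cons_val_two, Matrix.cons_val_three]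
    have e20 : Y 2 0 = -(X 2 0) := by
      rw [hYeq]
      simp only [Matrix.neg_apply, Matrix.mul_apply, Fin.sum_univ_four, Matrix.transpose_apply]
      norm_num [Jsym, Matrix.vecHead, Matrix.vecTail, Matrix.cons_val_zero, Matrix.cons_val_one, Matrix.cons_val_two, Matrix.cons_val_three]
    have e21 : Y 2 1 = -(X 3 0) := by
      rw [hYeq]
      simp only [Matrix.neg_apply, Matrix.mul_apply, Fin.sum_univ_four, Matrix.transpose_apply]
      norm_num [Jsym, Matrix.vecHead, Matrix.vecTail, Matrix.cons_val_zero, Matrix.cons_val_one, Matrix.cons_val_two, Matrix.cons_val_three]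
    have e22 : Y 2 2 = X 0 0 := by
      rw [hYeq]
      simp only [Matrix.neg_apply, Matrix.mul_apply, Fin.sum_univ_four, Matrix.transpose_apply]
      norm_num [Jsym, Matrix.vecHead, Matrix.vecTail, Matrix.cons_val_zero, Matrix.cons_val_one, Matrix.cons_val_two, Matrix.cons_val_three]
    have e23 : Y 2 3 = X 1 0 := by
      rw [hYeq]
      simp only [Matrix.neg_apply, Matrix.mul_apply, Fin.sum_univ_four, Matrix.transpose_apply]
      norm_num [Jsym, Matrix.vecHead, Matrix.vecTail, Matrix.cons_val_zero, Matrix.cons_val_one, Matrix.cons_val_two, Matrix.cons_val_three]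
    have e30 : Y 3 0 = -(X 2 1) := by
      rw [hYeq]
      simp only [Matrix.neg_apply, Matrix.mul_apply, Fin.sum_univ_four, Matrix.transpose_apply]
      norm_num [Jsym, Matrix.vecHead, Matrix.vecTail, Matrix.cons_val_zero, Matrix.cons_val_one, Matrix.cons_val_two, Matrix.cons_val_three]
    have e31 : Y 3 1 = -(X 3 1) := by
      rw [hYeq]
      simp only [Matrix.neg_apply, Matrix.mul_apply, Fin.sum_univ_four, Matrix.transpose_apply]
      norm_num [Jsym, Matrix.vecHead, Matrix.vecTail, Matrix.cons_val_zero, Matrix.cons_val_one, Matrix.cons_val_two, Matrix.cons_val_three]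
    have e33 : Y 3 3 = X 1 1 := by
      rw [hYeq]
      simp only [Matrix.neg_apply, Matrix.mul_apply, Fin.sum_univ_four, Matrix.transpose_apply]
      norm_num [Jsym, Matrix.vecHead, Matrix.vecTail, Matrix.cons_val_zero, Matrix.cons_val_one, Matrix.cons_val_two, Matrix.cons_val_three]
    refine ⟨⟨?_, ?_, ?_, ?_, ?_, ?_, ?_, ?_, ?_, ?_, ?_⟩, ?_, ?_⟩
    · show Yᵀ * Jsym * Y = Jsym
      have h3 : (X*Y)ᵀ * Jsym * (X*Y) = Jsym := by rw [hXY]; simp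
      rw [transpose_mul] at h3
      calc Yᵀ * Jsym * Y = Yᵀ * (Xᵀ * Jsym * X) * Y := by rw [hXsp]
        _ = Yᵀ * Xᵀ * Jsym * (X * Y) := by simp only [Matrix.mul_assoc]
        _ = Jsym := h3
    · rw [e00, Int.modEq_iff_dvd]
      simp only [ex1, ex2, ex3, ex4, ex5, ex8, ex9, ex10, exa, exb]
      exact ⟨x3, by ring⟩
    · rw [e11, Int.modEq_iff_dvd]
      simp only [ex1, ex2, ex3, ex4, ex5, ex8, ex9, ex10, exa, exb]
      exact ⟨x4, by ring⟩
    · rw [e22, Int.modEq_iff_dvd]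
      simp only [ex1, ex2, ex3, ex4, ex5, ex8, ex9, ex10, exa, exb]
      exact ⟨x1, by ring⟩
    · rw [e33, Int.modEq_iff_dvd]
      simp only [ex1, ex2, ex3, ex4, ex5, ex8, ex9, ex10, exa, exb]
      exact ⟨x2, by ring⟩
    · rw [e10, Int.modEq_iff_dvd]
      simp only [ex1, ex2, ex3, ex4, ex5, ex8, ex9, ex10, exa, exb]
      exact ⟨x8, by ring⟩
    · rw [e20, Int.modEq_iff_dvd]
      simp only [ex1, ex2, ex3, ex4, ex5, ex8, ex9, ex10, exa, exb]
      exact ⟨3*(X 0 1) - 5*xa, by ring⟩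
    · rw [e21, Int.modEq_iff_dvd]
      simp only [ex1, ex2, ex3, ex4, ex5, ex8, ex9, ex10, exa, exb]
      exact ⟨-x9, by ring⟩
    · rw [e23, Int.modEq_iff_dvd]
      simp only [ex1, ex2, ex3, ex4, ex5, ex8, ex9, ex10, exa, exb]
      exact ⟨x5, by ring⟩
    · rw [e30, Int.modEq_iff_dvd]
      simp only [ex1, ex2, ex3, ex4, ex5, ex8, ex9, ex10, exa, exb]
      exact ⟨4*(X 0 1)^2 + 4*(X 0 1) - 5*xb, by ring⟩
    · rw [e31, Int.modEq_iff_dvd]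
      simp only [ex1, ex2, ex3, ex4, ex5, ex8, ex9, ex10, exa, exb]
      exact ⟨-x10, by ring⟩
    · rw [e20, e01, Int.modEq_iff_dvd]
      simp only [ex1, ex2, ex3, ex4, ex5, ex8, ex9, ex10, exa, exb]
      refine ⟨12*(X 0 1)*(X 0 1)*(X 0 2) + 12*(X 0 1)*(X 0 2) + 3*(X 0 1)*x3 + (-15)*(X 0 2)*xb + (-3)*(X 1 2)*x10 + 3*(X 3 2)*x2 + (-1)*xa, ?_⟩
      linear_combination 15*h12
    · rw [e21, e01, Int.modEq_iff_dvd]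
      simp only [ex1, ex2, ex3, ex4, ex5, ex8, ex9, ex10, exa, exb]
      refine ⟨(X 0 1)*(X 0 1) + (-16)*(X 0 1)*(X 0 1)*(X 0 1)*(X 0 2) + 16*(X 0 1)*(X 0 1)*(X 0 2)*(X 3 2) + (-4)*(X 0 1)*(X 0 1)*x1 + (-4)*(X 0 1)*(X 0 1)*x3 + 16*(X 0 1)*(X 0 2) + 16*(X 0 1)*(X 0 2)*(X 3 2) + 20*(X 0 1)*(X 0 2)*xb + 4*(X 0 1)*(X 1 2)*x10 + (-4)*(X 0 1)*(X 3 2)*x2 + 4*(X 0 1)*(X 3 2)*x3 + (-4)*(X 0 1)*x1 + 4*(X 0 1)*x3 + (X 0 1)*xa + (-20)*(X 0 2)*(X 3 2)*xb + (-20)*(X 0 2)*xb + (-4)*(X 1 2)*(X 3 2)*x10 + (-4)*(X 1 2)*x10 + 4*(X 3 2)*(X 3 2)*x2 + 4*(X 3 2)*x2 + 5*x1*xb + x10*x5 + (-1)*x2*x9 + (-1)*xb, ?_⟩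
      linear_combination (-1 : ℤ)*h01 + (20*(X 3 2 - X 0 1 + 1))*h12
end

section
/- (Corollary (ii), containment) The matrices A and T belong to Γ̃(5,5); consequently the subgroup Γ of GL(4,ℤ) generated by A and T is contained in Γ̃(5,5). -/
open Matrix

lemma ex5 {e c : ℤ} (h : e ≡ c [ZMOD 5]) : ∃ a, e = c + 5 * a := by
  have := Int.ModEq.dvd h
  exact ⟨(e - c) / 5, by omega⟩

lemma ex25 {e c : ℤ} (h : e ≡ c [ZMOD 25]) : ∃ a, e = c + 25 * a := by
  have := Int.ModEq.dvd h
  exact ⟨(e - c) / 25, by omega⟩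

lemma modeq5 {a b : ℤ} (h : (a : ZMod 5) = (b : ZMod 5)) : a ≡ b [ZMOD 5] := by
  exact_mod_cast (ZMod.intCast_eq_intCast_iff a b 5).mp h

lemma modeq25 {a b : ℤ} (h : (a : ZMod 25) = (b : ZMod 25)) : a ≡ b [ZMOD 25] := by
  exact_mod_cast (ZMod.intCast_eq_intCast_iff a b 25).mp h

lemma mul_mem_GT {X Y : Matrix (Fin 4) (Fin 4) ℤ}
    (hX : X ∈ GammaTilde55) (hY : Y ∈ GammaTilde55) : X * Y ∈ GammaTilde55 := by
  simp only [GammaTilde55, Gamma55, Sp4Z, Set.mem_setOf_eq] at hX hY ⊢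
  obtain ⟨⟨hXs, hX00, hX11, hX22, hX33, hX10, -, -, hX23, hX30, hX31⟩, hX20, hX21⟩ := hX
  obtain ⟨⟨hYs, hY00, hY11, hY22, hY33, hY10, -, -, hY23, hY30, hY31⟩, hY20, hY21⟩ := hY
  obtain ⟨a1, e1⟩ := ex5 hX00
  obtain ⟨a2, e2⟩ := ex5 hX11
  obtain ⟨a3, e3⟩ := ex5 hX22
  obtain ⟨a4, e4⟩ := ex5 hX33
  obtain ⟨a5, e5⟩ := ex5 hX10
  obtain ⟨a6, e6⟩ := ex5 hX23
  obtain ⟨a7, e7⟩ := ex5 hX30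
  obtain ⟨a8, e8⟩ := ex5 hX31
  obtain ⟨a9, e9⟩ := ex25 hX20
  obtain ⟨a10, e10⟩ := ex25 hX21
  obtain ⟨b1, f1⟩ := ex5 hY00
  obtain ⟨b2, f2⟩ := ex5 hY11
  obtain ⟨b3, f3⟩ := ex5 hY22
  obtain ⟨b4, f4⟩ := ex5 hY33
  obtain ⟨b5, f5⟩ := ex5 hY10
  obtain ⟨b6, f6⟩ := ex5 hY23
  obtain ⟨b7, f7⟩ := ex5 hY30
  obtain ⟨b8, f8⟩ := ex5 hY31
  obtain ⟨b9, f9⟩ := ex25 hY20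
  obtain ⟨b10, f10⟩ := ex25 hY21
  refine ⟨⟨?_, ?_, ?_, ?_, ?_, ?_, ?_, ?_, ?_, ?_, ?_⟩, ?_, ?_⟩
  · have h : (X * Y)ᵀ * Jsym * (X * Y) = Yᵀ * (Xᵀ * Jsym * X) * Y := by
      rw [transpose_mul]; simp only [Matrix.mul_assoc]
    rw [h, hXs]; exact hYs
  all_goals
    first
      | (apply modeq5
         simp only [Matrix.mul_apply, Fin.sum_univ_four, e1, e2, e3, e4, e5, e6, e7, e8, e9, e10,
           f1, f2, f3, f4, f5, f6, f7, f8, f9, f10]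
         push_cast
         ring_nf
         reduce_mod_char)
      | (apply modeq25
         simp only [Matrix.mul_apply, Fin.sum_univ_four, e1, e2, e3, e4, e5, e6, e7, e8, e9, e10,
           f1, f2, f3, f4, f5, f6, f7, f8, f9, f10]
         push_cast
         ring_nf
         reduce_mod_char)

lemma memA : A ∈ GammaTilde55 := by
  simp only [GammaTilde55, Gamma55, Sp4Z, Set.mem_setOf_eq]; decide

lemma memAinv :
    (!![-9, -3, 5, 3; 0, 1, 0, -1; -20, -5, 11, 5; -15, 5, 8, -4] :
      Matrix (Fin 4) (Fin 4) ℤ) ∈ GammaTilde55 := by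
  simp only [GammaTilde55, Gamma55, Sp4Z, Set.mem_setOf_eq]; decide

lemma memT : T ∈ GammaTilde55 := by
  simp only [GammaTilde55, Gamma55, Sp4Z, Set.mem_setOf_eq]; decide

lemma memTinv :
    (!![1, 0, 0, 0; 0, 1, 0, 1; 0, 0, 1, 0; 0, 0, 0, 1] :
      Matrix (Fin 4) (Fin 4) ℤ) ∈ GammaTilde55 := by
  simp only [GammaTilde55, Gamma55, Sp4Z, Set.mem_setOf_eq]; decide

lemma memOne : (1 : Matrix (Fin 4) (Fin 4) ℤ) ∈ GammaTilde55 := by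
  simp only [GammaTilde55, Gamma55, Sp4Z, Set.mem_setOf_eq]; decide

/-- Corollary (ii), containment: `A, T ∈ Γ̃(5,5)`, hence `Γ ⊆ Γ̃(5,5)`. -/
theorem monodromy_subset_gammaTilde55 :
    A ∈ GammaTilde55 ∧ T ∈ GammaTilde55 ∧
    (∀ X : GL (Fin 4) ℤ, X ∈ Subgroup.closure {AGL, TGL} →
      (X : Matrix (Fin 4) (Fin 4) ℤ) ∈ GammaTilde55) := by
  refine ⟨memA, memT, fun X hX => ?_⟩
  have key : ((X : Matrix (Fin 4) (Fin 4) ℤ) ∈ GammaTilde55) ∧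
      (((X⁻¹ : GL (Fin 4) ℤ) : Matrix (Fin 4) (Fin 4) ℤ) ∈ GammaTilde55) := by
    induction hX using Subgroup.closure_induction with
    | mem x hx =>
      rcases hx with h | h
      · subst h; exact ⟨memA, memAinv⟩
      · rw [Set.mem_singleton_iff] at h; subst h; exact ⟨memT, memTinv⟩
    | one => exact ⟨memOne, by rw [inv_one]; exact memOne⟩
    | mul x y hx hy px py =>
      refine ⟨?_, ?_⟩
      · rw [Units.val_mul]; exact mul_mem_GT px.1 py.1
      · rw [_root_.mul_inv_rev, Units.val_mul]; exact mul_mem_GT py.2 px.2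
    | inv x hx px => exact ⟨px.2, by rw [inv_inv]; exact px.1⟩
  exact key.1
end
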